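/- arXiv:math/9510215 — 9 statements merged into one kernel-verified Lean document; each statement's English description precedes it below -/
import Mathlib

section
/- There exists a family ⟨A^α_k : α < ω₁, k < ω⟩ of finite subsets of ω₁ such that for all α < ω₁: (1) α = ⋃_{k<ω} A^α_k; (2) if k < l then A^α_k ⊆ A^α_l; and (3) if β < α and β ∈ A^α_k then A^β_k = A^α_k ∩ β. -/
open Classical in
noncomputable def seqCF (α : Ordinal) : ℕ → Ordinal :=
  if h : ∃ γ : ℕ → Ordinal, StrictMono γ ∧ (∀ n, γ n < α) ∧ (∀ β < α, ∃ n, β < γ n)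
  then h.choose else fun _ => 0

theorem seqCF_lt {α : Ordinal} (h0 : α ≠ 0) (n : ℕ) : seqCF α n < α := by
  rw [seqCF]
  split
  · next h => exact h.choose_spec.2.1 n
  · exact pos_iff_ne_zero.mpr h0

theorem seqCF_spec {α : Ordinal}
    (h : ∃ γ : ℕ → Ordinal, StrictMono γ ∧ (∀ n, γ n < α) ∧ (∀ β < α, ∃ n, β < γ n)) :
    StrictMono (seqCF α) ∧ (∀ n, seqCF α n < α) ∧ (∀ β < α, ∃ n, β < seqCF α n) := by
  rw [seqCF, dif_pos h]
  exact h.choose_spec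

open Classical in
noncomputable def Afam (α : Ordinal) : ℕ → Finset Ordinal :=
  if h0 : α = 0 then fun _ => ∅
  else if hs : ∃ β, α = β + 1 then fun k => insert hs.choose (Afam hs.choose k)
  else fun k =>
    Afam (seqCF α (Nat.findGreatest
      (fun n => ∀ i < n, seqCF α i ∈ Afam (seqCF α (i + 1)) k) k)) k
termination_by α
decreasing_by
  all_goals first
    | exact lt_of_lt_of_eq (lt_add_one _) hs.choose_spec.symm
    | exact seqCF_lt h0 _

open Classical in
noncomputable def chainLen (α : Ordinal) (k : ℕ) : ℕ :=
  Nat.findGreatest (fun n => ∀ i < n, seqCF α i ∈ Afam (seqCF α (i + 1)) k) k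

theorem Afam_zero : Afam 0 = fun _ => ∅ := by
  rw [Afam]; simp

theorem Afam_succ (β : Ordinal) : Afam (β + 1) = fun k => insert β (Afam β k) := by
  have h0 : (β + 1) ≠ 0 := by
    have : (0 : Ordinal) < β + 1 := lt_of_le_of_lt (zero_le (a := β)) (lt_add_one β)
    exact this.ne'
  have hs : ∃ γ : Ordinal, β + 1 = γ + 1 := ⟨β, rfl⟩
  have hc : hs.choose = β := by
    have := hs.choose_spec
    have h1 : hs.choose ≤ β := by
      have : hs.choose < β + 1 := lt_of_lt_of_eq (lt_add_one _) this.symm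
      exact Order.lt_add_one_iff.mp this
    have h2 : β ≤ hs.choose := by
      have : β < hs.choose + 1 := this ▸ lt_add_one β
      exact Order.lt_add_one_iff.mp this
    exact le_antisymm h1 h2
  rw [Afam, dif_neg h0, dif_pos hs, hc]

theorem Afam_limit {α : Ordinal} (h0 : α ≠ 0) (hs : ¬∃ β, α = β + 1) (k : ℕ) :
    Afam α k = Afam (seqCF α (chainLen α k)) k := by
  conv_lhs => rw [Afam]
  rw [dif_neg h0, dif_neg hs]
  rfl

theorem exists_cofinal_seq {α : Ordinal} (hα : α < (Cardinal.aleph 1).ord)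
    (hl : Order.IsSuccLimit α) :
    ∃ γ : ℕ → Ordinal, StrictMono γ ∧ (∀ n, γ n < α) ∧ (∀ β < α, ∃ n, β < γ n) := by
  have hcard : α.card ≤ Cardinal.aleph0 := by
    have := Cardinal.lt_ord.mp hα
    rwa [← Cardinal.succ_aleph0, Order.lt_succ_iff] at this
  have hmk : Cardinal.mk (Set.Iio α) ≤ Cardinal.aleph0 := by
    rw [Ordinal.mk_Iio_ordinal]
    calc Cardinal.lift.{_+1} α.card ≤ Cardinal.lift.{_+1} Cardinal.aleph0 :=
          Cardinal.lift_le.mpr hcard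
      _ = Cardinal.aleph0 := Cardinal.lift_aleph0
  have hcount : Countable (Set.Iio α) := Cardinal.mk_le_aleph0_iff.mp hmk
  have hne : Nonempty (Set.Iio α) := ⟨⟨0, hl.pos⟩⟩
  obtain ⟨f, hf⟩ := exists_surjective_nat (Set.Iio α)
  let g : ℕ → Ordinal := fun n => Nat.rec (f 0).1 (fun n ih => max (ih + 1) (f (n + 1)).1) n
  have hglt : ∀ n, g n < α := by
    intro n
    induction n with
    | zero => exact (f 0).2
    | succ n ih =>
      refine max_lt ?_ (f (n + 1)).2
      rw [Ordinal.add_one_eq_succ]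
      exact hl.succ_lt ih
  have hgmono : StrictMono g := by
    apply strictMono_nat_of_lt_succ
    intro n
    exact lt_of_lt_of_le (lt_add_one _) (le_max_left _ _)
  refine ⟨g, hgmono, hglt, ?_⟩
  intro β hβ
  have hβ1 : β + 1 < α := by rw [Ordinal.add_one_eq_succ]; exact hl.succ_lt hβ
  obtain ⟨n, hn⟩ := hf ⟨β + 1, hβ1⟩
  refine ⟨n, ?_⟩
  have hge : (f n).1 ≤ g n := by
    cases n with
    | zero => exact le_rfl
    | succ m => exact le_max_right _ _
  have : (f n).1 = β + 1 := by rw [hn]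
  refine lt_of_lt_of_le ?_ hge
  rw [this]
  exact lt_add_one β

open Classical in
theorem chainLen_spec (α : Ordinal) (k : ℕ) :
    ∀ i < chainLen α k, seqCF α i ∈ Afam (seqCF α (i + 1)) k := by
  unfold chainLen
  exact Nat.findGreatest_spec
    (P := fun n => ∀ i < n, seqCF α i ∈ Afam (seqCF α (i + 1)) k)
    (Nat.zero_le k) (fun i h => absurd h (Nat.not_lt_zero i))

open Classical in
theorem chainLen_le (α : Ordinal) (k : ℕ) : chainLen α k ≤ k := by
  unfold chainLen
  exact Nat.findGreatest_le k

open Classical in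
theorem le_chainLen {α : Ordinal} {k n : ℕ} (hn : n ≤ k)
    (h : ∀ i < n, seqCF α i ∈ Afam (seqCF α (i + 1)) k) : n ≤ chainLen α k := by
  unfold chainLen
  exact Nat.le_findGreatest hn h

def Good (α : Ordinal) : Prop :=
  (∀ β : Ordinal, β < α ↔ ∃ k : ℕ, β ∈ Afam α k) ∧
  (∀ k l : ℕ, k ≤ l → Afam α k ⊆ Afam α l) ∧
  (∀ β < α, ∀ k : ℕ, β ∈ Afam α k → Afam β k = (Afam α k).filter (fun γ => γ < β))

theorem good_all : ∀ α < (Cardinal.aleph 1).ord, Good α := by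
  intro α
  induction α using Ordinal.induction with
  | h α IH =>
  intro hα
  by_cases h0 : α = 0
  · subst h0
    refine ⟨?_, ?_, ?_⟩
    · intro β
      simp [Afam_zero, not_lt_of_ge (zero_le (a := β))]
    · intro k l _
      simp [Afam_zero]
    · intro β hβ
      exact absurd hβ (not_lt_of_ge (zero_le (a := β)))
  by_cases hs : ∃ β, α = β + 1
  · obtain ⟨β, rfl⟩ := hs
    have hβα : β < β + 1 := lt_add_one β
    obtain ⟨hG1, hG2, hG3⟩ := IH β hβα (hβα.trans hα)
    unfold Good
    simp only [Afam_succ]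
    refine ⟨?_, ?_, ?_⟩
    · intro x
      constructor
      · intro hx
        rcases (Order.lt_add_one_iff.mp hx).lt_or_eq with hx' | hx'
        · obtain ⟨k, hk⟩ := (hG1 x).mp hx'
          exact ⟨k, Finset.mem_insert_of_mem hk⟩
        · exact ⟨0, hx' ▸ Finset.mem_insert_self _ _⟩
      · rintro ⟨k, hk⟩
        rcases Finset.mem_insert.mp hk with rfl | hmem
        · exact hβα
        · exact ((hG1 x).mpr ⟨k, hmem⟩).trans hβα
    · intro k l hkl
      exact Finset.insert_subset_insert _ (hG2 k l hkl)
    · intro x hxα k hk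
      rcases Finset.mem_insert.mp hk with rfl | hmem
      · rw [Finset.filter_insert, if_neg (lt_irrefl x)]
        exact (Finset.filter_eq_self.mpr (fun y hy => (hG1 y).mpr ⟨k, hy⟩)).symm
      · have hxβ : x < β := (hG1 x).mpr ⟨k, hmem⟩
        rw [Finset.filter_insert, if_neg (asymm hxβ)]
        exact hG3 x hxβ k hmem
  -- limit case
  have hs' : ¬∃ a, α = Order.succ a := by
    rintro ⟨a, ha⟩
    exact hs ⟨a, by rw [ha, Ordinal.add_one_eq_succ]⟩
  have hl : Order.IsSuccLimit α := ((Ordinal.zero_or_succ_or_isSuccLimit α).resolve_left h0).resolve_left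
    (fun ⟨a, ha⟩ => hs' ⟨a, ha.symm⟩)
  obtain ⟨hsm, hlt, hcof⟩ := seqCF_spec (exists_cofinal_seq hα hl)
  set γ : ℕ → Ordinal := seqCF α with hγdef
  have hGγ : ∀ n, Good (γ n) := fun n => IH _ (hlt n) ((hlt n).trans hα)
  have hA : ∀ k, Afam α k = Afam (γ (chainLen α k)) k := Afam_limit h0 hs
  have hself : ∀ (m : ℕ) (k : ℕ),
      Afam (γ m) k = (Afam (γ m) k).filter (fun x => x < γ m) :=
    fun m k => (Finset.filter_eq_self.mpr (fun y hy => ((hGγ m).1 y).mpr ⟨k, hy⟩)).symm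
  have hchain : ∀ (k n : ℕ), (∀ i < n, γ i ∈ Afam (γ (i + 1)) k) →
      ∀ i ≤ n, Afam (γ i) k = (Afam (γ n) k).filter (fun x => x < γ i) := by
    intro k n
    induction n with
    | zero =>
      intro _ i hi
      rw [Nat.le_zero.mp hi]
      exact hself 0 k
    | succ n ihn =>
      intro hch i hi
      rcases eq_or_lt_of_le hi with rfl | hi'
      · exact hself (n + 1) k
      · have hi'' : i ≤ n := Nat.lt_succ_iff.mp hi'
        have hco : Afam (γ n) k = (Afam (γ (n + 1)) k).filter (fun x => x < γ n) :=
          (hGγ (n + 1)).2.2 (γ n) (hsm (lt_add_one n)) k (hch n (lt_add_one n))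
        rw [ihn (fun j hj => hch j (hj.trans (lt_add_one n))) i hi'', hco,
          Finset.filter_filter]
        apply Finset.filter_congr
        intro x _
        constructor
        · exact fun h => h.2
        · exact fun h => ⟨h.trans_le (hsm.monotone hi''), h⟩
  refine ⟨?_, ?_, ?_⟩
  · intro x
    constructor
    · intro hx
      obtain ⟨n, hn⟩ := hcof x hx
      have hex : ∀ i : ℕ, ∃ k, γ i ∈ Afam (γ (i + 1)) k :=
        fun i => ((hGγ (i + 1)).1 (γ i)).mp (hsm (lt_add_one i))
      choose kk hkk using hex
      obtain ⟨kx, hkx⟩ := ((hGγ n).1 x).mp hn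
      set K := max (max n kx) ((Finset.range n).sup kk) with hK
      have hPK : ∀ i < n, γ i ∈ Afam (γ (i + 1)) K := fun i hi =>
        (hGγ (i + 1)).2.1 (kk i) K
          (le_trans (Finset.le_sup (Finset.mem_range.mpr hi)) (le_max_right _ _)) (hkk i)
      have hnK : n ≤ chainLen α K :=
        le_chainLen ((le_max_left n kx).trans (le_max_left _ _)) hPK
      refine ⟨K, ?_⟩
      have hxK : x ∈ Afam (γ n) K :=
        (hGγ n).2.1 kx K ((le_max_right n kx).trans (le_max_left _ _)) hkx
      rw [hchain K (chainLen α K) (chainLen_spec α K) n hnK] at hxK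
      rw [hA K]
      exact Finset.mem_of_mem_filter x hxK
    · rintro ⟨k, hk⟩
      rw [hA k] at hk
      exact (((hGγ (chainLen α k)).1 x).mpr ⟨k, hk⟩).trans (hlt (chainLen α k))
  · intro k l hkl
    have h1 : chainLen α k ≤ chainLen α l :=
      le_chainLen ((chainLen_le α k).trans hkl)
        (fun i hi => (hGγ (i + 1)).2.1 k l hkl (chainLen_spec α k i hi))
    rw [hA k, hA l]
    refine subset_trans ((hGγ (chainLen α k)).2.1 k l hkl) ?_
    rw [hchain l (chainLen α l) (chainLen_spec α l) (chainLen α k) h1]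
    exact Finset.filter_subset _ _
  · intro x hxα k hk
    rw [hA k] at hk ⊢
    have hxγ : x < γ (chainLen α k) := ((hGγ (chainLen α k)).1 x).mpr ⟨k, hk⟩
    exact (hGγ (chainLen α k)).2.2 x hxγ k hk

/-- There exists a coherent family of finite sets filtrating each ordinal below ω₁. -/
theorem coherent_finite_filtrations :
    ∃ A : Ordinal → ℕ → Finset Ordinal,
      ∀ α < (Cardinal.aleph 1).ord,
        ((∀ β : Ordinal, (β < α ↔ ∃ k : ℕ, β ∈ A α k)) ∧
         (∀ k l : ℕ, k < l → A α k ⊆ A α l) ∧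
         (∀ β < α, ∀ k : ℕ, β ∈ A α k →
            A β k = (A α k).filter (fun γ => γ < β))) := by
  refine ⟨Afam, fun α hα => ?_⟩
  obtain ⟨h1, h2, h3⟩ := good_all α hα
  exact ⟨h1, fun k l hkl => h2 k l hkl.le, h3⟩
end

section
/- Let F be a field of uncountable cardinality λ. There exists a sequence ⟨a_ν : ν < λ⟩ of elements of F such that whenever ⟨ν_{ij} : 1 ≤ i,j ≤ m⟩ is a finite family of pairwise distinct ordinals below λ, the m×m matrix with (i,j)-entry a_{ν_{ij}} has nonzero determinant. -/
open MvPolynomial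

/-- The determinant of a matrix of pairwise distinct variables is a nonzero polynomial. -/
lemma det_X_ne_zero {R : Type*} [CommRing R] [Nontrivial R] {ι : Type*} {m : ℕ}
    (w : Fin m × Fin m → ι) (hw : Function.Injective w) :
    (Matrix.of fun i j : Fin m => (X (w (i, j)) : MvPolynomial ι R)).det ≠ 0 := by
  classical
  intro h0
  set φ : ι → R := fun k =>
    if h : ∃ p : Fin m × Fin m, w p = k then (if h.choose.1 = h.choose.2 then 1 else 0) else 0
  have hφ : ∀ i j : Fin m, φ (w (i, j)) = if i = j then 1 else 0 := by
    intro i j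
    have hex : ∃ p : Fin m × Fin m, w p = w (i, j) := ⟨(i, j), rfl⟩
    have hch : hex.choose = (i, j) := hw hex.choose_spec
    simp only [φ, dif_pos hex, hch]
  have := congrArg (MvPolynomial.eval φ) h0
  rw [map_zero, RingHom.map_det] at this
  have hmat : (Matrix.of fun i j : Fin m => (X (w (i, j)) : MvPolynomial ι R)).map
      (MvPolynomial.eval φ) = (1 : Matrix (Fin m) (Fin m) R) := by
    ext i j
    simp [Matrix.map_apply, hφ, Matrix.one_apply]
  rw [RingHom.mapMatrix_apply, hmat, Matrix.det_one] at this
  exact one_ne_zero this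

lemma det_ne_zero_of_algInd {R F ι : Type*} [CommRing R] [Nontrivial R] [CommRing F]
    [Algebra R F] {v : ι → F} (hv : AlgebraicIndependent R v) {m : ℕ}
    (w : Fin m × Fin m → ι) (hw : Function.Injective w) :
    (Matrix.of fun i j : Fin m => v (w (i, j))).det ≠ 0 := by
  have key := det_X_ne_zero (R := R) w hw
  intro h0
  apply key
  have hmat : (aeval (R := R) v).mapMatrix
      (Matrix.of fun i j : Fin m => (X (w (i, j)) : MvPolynomial ι R))
      = Matrix.of fun i j : Fin m => v (w (i, j)) := by
    ext i j
    simp [AlgHom.mapMatrix_apply, Matrix.map_apply]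
  have h2 : (aeval (R := R) v) (Matrix.of fun i j : Fin m => (X (w (i, j)) : MvPolynomial ι R)).det
      = 0 := by
    rw [AlgHom.map_det, hmat, h0]
  exact hv (h2.trans (map_zero _).symm)

universe u

lemma card_le_of_transBasis {R : Type} {F : Type u} {ι : Type u} [CommRing R] [Nontrivial R]
    [Countable R] [Field F] [Algebra R F] {v : ι → F} (hv : IsTranscendenceBasis R v) :
    Cardinal.mk F ≤ max (Cardinal.mk ι) Cardinal.aleph0 := by
  haveI := hv.isAlgebraic
  haveI : Module.IsTorsionFree (Algebra.adjoin R (Set.range v)) F := inferInstance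
  calc Cardinal.mk F ≤ max (Cardinal.mk (Algebra.adjoin R (Set.range v))) Cardinal.aleph0 :=
        Algebra.IsAlgebraic.cardinalMk_le_max _ _
    _ = max (Cardinal.mk (MvPolynomial ι R)) Cardinal.aleph0 := by
        rw [Cardinal.eq.2 ⟨hv.1.aevalEquiv.toEquiv⟩]
    _ = max (Cardinal.mk (MvPolynomial ι (ULift.{u} R))) Cardinal.aleph0 := by
        rw [Cardinal.eq.2 ⟨(MvPolynomial.mapEquiv ι ULift.ringEquiv.symm).toEquiv⟩]
    _ ≤ max (max (max (Cardinal.mk.{u} (ULift.{u} R)) (Cardinal.mk ι)) Cardinal.aleph0)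
          Cardinal.aleph0 := max_le_max MvPolynomial.cardinalMk_le_max le_rfl
    _ ≤ max (Cardinal.mk ι) Cardinal.aleph0 := by
        have hR : Cardinal.mk.{u} (ULift.{u} R) ≤ Cardinal.aleph0 := Cardinal.mk_le_aleph0
        exact max_le (max_le (max_le (hR.trans (le_max_right _ _)) (le_max_left _ _))
          (le_max_right _ _)) (le_max_right _ _)

lemma main_aux {F : Type u} [Field F] (R : Type) [CommRing R] [Nontrivial R] [Countable R]
    [Algebra R F] (hinj : Function.Injective (algebraMap R F)) (lam : Cardinal)
    (hcard : Cardinal.mk F = lam) (hunc : Cardinal.aleph 1 ≤ lam) :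
    ∃ a : Ordinal → F,
      ∀ (m : ℕ) (ν : Fin m → Fin m → Ordinal),
        (∀ i j, ν i j < lam.ord) →
        Function.Injective (fun p : Fin m × Fin m => ν p.1 p.2) →
        (Matrix.of fun i j : Fin m => a (ν i j)).det ≠ 0 := by
  classical
  haveI : FaithfulSMul R F := (faithfulSMul_iff_algebraMap_injective R F).2 hinj
  obtain ⟨s, hs⟩ := exists_isTranscendenceBasis R F
  have halef : Cardinal.aleph0 < lam :=
    lt_of_lt_of_le Cardinal.aleph0_lt_aleph_one hunc
  have h1 : lam ≤ max (Cardinal.mk s) Cardinal.aleph0 := hcard ▸ card_le_of_transBasis hs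
  have h2 : lam ≤ Cardinal.mk s := by
    by_contra h
    exact absurd h1 (not_le_of_gt (max_lt (lt_of_not_ge h) halef))
  have h3 : Cardinal.mk lam.ord.ToType ≤ Cardinal.mk s := by
    rw [Cardinal.mk_ord_toType]; exact h2
  obtain ⟨emb⟩ := (Cardinal.le_def _ _).1 h3
  set e := Ordinal.ToType.mk (o := lam.ord) with he
  refine ⟨fun o => if h : o < lam.ord then ((emb (e ⟨o, h⟩) : s) : F) else 0,
    fun m ν hb hν => ?_⟩
  set w : Fin m × Fin m → s := fun p => emb (e ⟨ν p.1 p.2, hb p.1 p.2⟩) with hw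
  have hwinj : Function.Injective w := by
    intro p q hpq
    apply hν
    have := e.toEquiv.injective (emb.injective hpq)
    exact congrArg Subtype.val this
  have hmat : (Matrix.of fun i j : Fin m =>
        if h : ν i j < lam.ord then ((emb (e ⟨ν i j, h⟩) : s) : F) else 0)
      = Matrix.of fun i j : Fin m => ((w (i, j) : s) : F) := by
    ext i j
    simp only [Matrix.of_apply, dif_pos (hb i j), hw]
  rw [hmat]
  exact det_ne_zero_of_algInd hs.1 w hwinj

/-- Over a field of uncountable cardinality λ there is a λ-sequence all of whose
square matrices with pairwise distinct ordinal indices are nonsingular. -/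
theorem exists_long_seq_nonsingular_submatrices (F : Type*) [Field F] (lam : Cardinal)
    (hcard : Cardinal.mk F = lam) (hunc : Cardinal.aleph 1 ≤ lam) :
    ∃ a : Ordinal → F,
      ∀ (m : ℕ) (ν : Fin m → Fin m → Ordinal),
        (∀ i j, ν i j < lam.ord) →
        Function.Injective (fun p : Fin m × Fin m => ν p.1 p.2) →
        (Matrix.of fun i j : Fin m => a (ν i j)).det ≠ 0 := by
  rcases CharP.char_is_prime_or_zero F (ringChar F) with hp | h0
  · haveI : Fact (ringChar F).Prime := ⟨hp⟩
    haveI : CharP F (ringChar F) := ringChar.charP F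
    haveI : Algebra (ZMod (ringChar F)) F := ZMod.algebra F (ringChar F)
    exact main_aux (ZMod (ringChar F)) (algebraMap (ZMod (ringChar F)) F).injective lam hcard hunc
  · haveI : CharP F 0 := h0 ▸ ringChar.charP F
    haveI : CharZero F := CharP.charP_to_charZero F
    have : Function.Injective (algebraMap ℤ F) := by
      intro a b h
      rwa [algebraMap_int_eq, eq_intCast, eq_intCast, Int.cast_inj] at h
    exact main_aux ℤ this lam hcard hunc
end

section
/- Let ⟨E,Φ⟩ be a symmetric bilinear space over a field F, and let λ be an infinite cardinal with λ ≤ dim E. If for every subspace U ⊆ E with dim U ≥ λ one has dim U^⊥ < dim E, then dim E ≤ |F|^λ. -/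
universe u

/-- The orthogonal complement of a subspace with respect to a bilinear form. -/
def ortho {F E : Type u} [Field F] [AddCommGroup E] [Module F E]
    (Φ : E →ₗ[F] E →ₗ[F] F) (U : Submodule F E) : Submodule F E where
  carrier := {x | ∀ y ∈ U, Φ x y = 0}
  add_mem' := by
    intro a b ha hb y hy
    simp [map_add, ha y hy, hb y hy]
  zero_mem' := by
    intro y hy; simp
  smul_mem' := by
    intro c x hx y hy
    simp [hx y hy]

/-- |F|^λ is an upper bound for the dimension of a λ-Gross space over F. -/
theorem dim_le_of_lambda_gross {F E : Type u} [Field F] [AddCommGroup E] [Module F E]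
    (Φ : E →ₗ[F] E →ₗ[F] F) (hsymm : ∀ x y, Φ x y = Φ y x)
    (lam : Cardinal.{u}) (hlam : Cardinal.aleph0 ≤ lam) (hle : lam ≤ Module.rank F E)
    (hgross : ∀ U : Submodule F E, lam ≤ Module.rank F U →
      Module.rank F (ortho Φ U) < Module.rank F E) :
    Module.rank F E ≤ Cardinal.mk F ^ lam := by
  by_contra hcon
  push_neg at hcon
  -- pick a basis-subset of size lam
  set B : Set E := Module.Basis.ofVectorSpaceIndex F E with hB
  have hrank : Module.rank F E = Cardinal.mk B :=
    ((Module.Basis.ofVectorSpace F E).mk_eq_rank'').symm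
  obtain ⟨s, hs⟩ : ∃ s : Set B, Cardinal.mk s = lam :=
    Cardinal.le_mk_iff_exists_set.mp (hle.trans_eq hrank)
  set T : Set E := Subtype.val '' s with hT
  have hTcard : Cardinal.mk T = lam := by
    rw [hT, Cardinal.mk_image_eq Subtype.val_injective, hs]
  have hTB : T ⊆ B := by
    rintro x ⟨⟨y, hy⟩, _, rfl⟩; exact hy
  have hli : LinearIndependent F ((↑) : T → E) :=
    LinearIndepOn.mono (v := id) (Module.Basis.ofVectorSpaceIndex.linearIndependent F E) hTB
  set U : Submodule F E := Submodule.span F T with hU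
  have hUrank : Module.rank F U = lam := by
    rw [hU, rank_span_set hli, hTcard]
  -- the evaluation map
  set f : E →ₗ[F] (T → F) := LinearMap.pi (fun t : T => Φ.flip ↑t) with hf
  have hker : LinearMap.ker f ≤ ortho Φ U := by
    intro x hx y hy
    have hx' : ∀ t : T, Φ x t = 0 := by
      intro t
      have := congrFun (LinearMap.mem_ker.mp hx) t
      simpa [hf] using this
    have : U ≤ LinearMap.ker (Φ x) := by
      rw [hU, Submodule.span_le]
      intro z hz
      exact LinearMap.mem_ker.mpr (hx' ⟨z, hz⟩)
    exact this hy
  have hEinf : Cardinal.aleph0 ≤ Module.rank F E := hlam.trans hle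
  have h1 : Module.rank F (LinearMap.ker f) < Module.rank F E :=
    lt_of_le_of_lt (Submodule.rank_mono hker) (hgross U (le_of_eq hUrank.symm))
  have h2 : Module.rank F (LinearMap.range f) ≤ Cardinal.mk F ^ lam := by
    calc Module.rank F (LinearMap.range f) ≤ Module.rank F (T → F) :=
          Submodule.rank_le _
      _ ≤ Cardinal.mk (T → F) := rank_le_card _ _
      _ = Cardinal.mk F ^ lam := by rw [← Cardinal.power_def, hTcard]
  have hsum := LinearMap.rank_range_add_rank_ker f
  have : Module.rank F (LinearMap.range f) + Module.rank F (LinearMap.ker f)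
      < Module.rank F E :=
    Cardinal.add_lt_of_lt hEinf (lt_of_le_of_lt h2 hcon) h1
  rw [hsum] at this
  exact lt_irrefl _ this
end

section
/- Let E be a vector space with basis ⟨e_α : α < κ⟩ over a field F, with symmetric bilinear form Φ, and let λ ≤ κ be infinite. If κ > |F|^λ, then there exists a subset X ⊆ κ of cardinality κ and a family of κ-many linearly independent vectors of the form e_α − e_β (α, β ∈ X appropriately chosen) all lying in the orthogonal complement of span⟨e_β : β < λ⟩. In particular E is not a λ-Gross space. -/
universe u

/-- If a symmetric bilinear space of dimension κ > |F|^λ has a basis ⟨e_α : α < κ⟩, then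
there is a set X of indices of size κ and κ-many linearly independent differences of basis
vectors, all orthogonal to the span of the first λ basis vectors; in particular the space
is not λ-Gross. -/
theorem not_lambda_gross_of_large_dim {F E : Type u} [Field F] [AddCommGroup E] [Module F E]
    {ι : Type u} [LinearOrder ι] [WellFoundedLT ι]
    (b : Module.Basis ι F E) (Φ : E →ₗ[F] E →ₗ[F] F) (hsymm : ∀ x y, Φ x y = Φ y x)
    (κ lam : Cardinal.{u}) (hκ : Cardinal.mk ι = κ)
    (hlam : Cardinal.aleph0 ≤ lam) (hle : lam ≤ κ)
    (hbig : Cardinal.mk F ^ lam < κ)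
    (L : Set ι) (hL : IsLowerSet L) (hLcard : Cardinal.mk L = lam) :
    (∃ (X : Set ι) (g : X → E), Cardinal.mk X = κ ∧ LinearIndependent F g ∧
      (∀ x, ∃ α ∈ X, ∃ β ∈ X, g x = b α - b β) ∧
      (∀ x, g x ∈ ortho Φ (Submodule.span F (⇑b '' L)))) ∧
    ¬ (∀ U : Submodule F E, lam ≤ Module.rank F U →
        Module.rank F (ortho Φ U) < Module.rank F E) := by
  classical
  -- basic cardinal facts
  have hF2 : (2 : Cardinal) ≤ Cardinal.mk F := by
    rw [Cardinal.two_le_iff]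
    exact ⟨0, 1, zero_ne_one⟩
  have hFlam_inf : Cardinal.aleph0 ≤ Cardinal.mk F ^ lam :=
    calc Cardinal.aleph0 ≤ lam := hlam
    _ ≤ 2 ^ lam := (Cardinal.cantor lam).le
    _ ≤ Cardinal.mk F ^ lam := Cardinal.power_le_power_right hF2
  have hκinf : Cardinal.aleph0 ≤ κ := hFlam_inf.trans hbig.le
  haveI hι : Infinite ι := Cardinal.infinite_iff.mpr (by rw [hκ]; exact hκinf)
  -- the coloring function
  set f : ι → (L → F) := fun α β => Φ (b α) (b β) with hf
  have hmkLF : Cardinal.mk (L → F) = Cardinal.mk F ^ lam := by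
    rw [← Cardinal.power_def, hLcard]
  -- choice of representatives and injections within infinite fibers
  have hchoice : ∀ v : (L → F), ∃ (r : ι) (jj : ι → ι),
      (f ⁻¹' {v}).Infinite →
        r ∈ f ⁻¹' {v} ∧ (∀ α ∈ f ⁻¹' {v}, jj α ∈ f ⁻¹' {v} ∧ jj α ≠ r) ∧
        Set.InjOn jj (f ⁻¹' {v}) := by
    intro v
    by_cases hv : (f ⁻¹' {v}).Infinite
    · obtain ⟨r, hr⟩ := hv.nonempty
      have hdinf : (f ⁻¹' {v} \ {r}).Infinite := hv.diff (Set.finite_singleton r)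
      haveI := hdinf.to_subtype
      have h1 : Cardinal.mk (f ⁻¹' {v}) ≤ Cardinal.mk ↥(f ⁻¹' {v} \ {r}) := by
        have hsub : f ⁻¹' {v} ⊆ (f ⁻¹' {v} \ {r}) ∪ {r} := by
          intro x hx
          by_cases hxr : x = r
          · exact Or.inr hxr
          · exact Or.inl ⟨hx, hxr⟩
        have h2 : Cardinal.mk (f ⁻¹' {v}) ≤ Cardinal.mk ↥(f ⁻¹' {v} \ {r}) + 1 := by
          calc Cardinal.mk (f ⁻¹' {v})
              ≤ Cardinal.mk ↥((f ⁻¹' {v} \ {r}) ∪ {r}) := Cardinal.mk_le_mk_of_subset hsub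
            _ ≤ Cardinal.mk ↥(f ⁻¹' {v} \ {r}) + Cardinal.mk ({r} : Set ι) :=
                Cardinal.mk_union_le _ _
            _ = Cardinal.mk ↥(f ⁻¹' {v} \ {r}) + 1 := by rw [Cardinal.mk_singleton]
        rwa [Cardinal.add_one_eq (Cardinal.aleph0_le_mk _)] at h2
      obtain ⟨emb⟩ := Cardinal.le_def _ _ |>.mp h1
      refine ⟨r, fun α => if h : α ∈ f ⁻¹' {v} then (emb ⟨α, h⟩ : ι) else r, fun _ => ?_⟩
      refine ⟨hr, ?_, ?_⟩
      · intro α hα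
        simp only [dif_pos hα]
        exact ⟨(emb ⟨α, hα⟩).2.1, fun h => (emb ⟨α, hα⟩).2.2 h⟩
      · intro α hα β hβ h
        simp only [dif_pos hα, dif_pos hβ] at h
        have := emb.injective (Subtype.ext h)
        exact congrArg Subtype.val this
    · exact ⟨Classical.arbitrary ι, id, fun h => absurd h hv⟩
  choose R J hRJ using hchoice
  set X : Set ι := {α | (f ⁻¹' {f α}).Infinite} with hX
  set ψ : ι → ι := fun α => J (f α) α with hψ
  set ρ : ι → ι := fun α => R (f α) with hρ
  -- basic properties
  have hmem_fiber : ∀ α : ι, α ∈ f ⁻¹' {f α} := fun α => rfl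
  have hψ_mem : ∀ α ∈ X, ψ α ∈ f ⁻¹' {f α} ∧ ψ α ≠ ρ α := by
    intro α hα
    exact (hRJ (f α) hα).2.1 α (hmem_fiber α)
  have hρ_mem : ∀ α ∈ X, ρ α ∈ f ⁻¹' {f α} := by
    intro α hα
    exact (hRJ (f α) hα).1
  have hfψ : ∀ α ∈ X, f (ψ α) = f α := by
    intro α hα; exact (hψ_mem α hα).1
  have hfρ : ∀ α ∈ X, f (ρ α) = f α := by
    intro α hα; exact hρ_mem α hα
  have hψX : ∀ α ∈ X, ψ α ∈ X := by
    intro α hα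
    show (f ⁻¹' {f (ψ α)}).Infinite
    rw [hfψ α hα]; exact hα
  have hρX : ∀ α ∈ X, ρ α ∈ X := by
    intro α hα
    show (f ⁻¹' {f (ρ α)}).Infinite
    rw [hfρ α hα]; exact hα
  have hψ_inj : ∀ α ∈ X, ∀ β ∈ X, ψ α = ψ β → α = β := by
    intro α hα β hβ h
    have hfab : f α = f β := by rw [← hfψ α hα, ← hfψ β hβ, h]
    have hα' : α ∈ f ⁻¹' {f β} := by
      simp only [Set.mem_preimage, Set.mem_singleton_iff]; exact hfab
    have h2 : J (f α) α = J (f β) β := h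
    rw [hfab] at h2
    exact (hRJ (f β) hβ).2.2 hα' (hmem_fiber β) h2
  have hψρ : ∀ α ∈ X, ∀ β ∈ X, ψ α ≠ ρ β := by
    intro α hα β hβ h
    by_cases hfab : f α = f β
    · have : ρ β = ρ α := by show R (f β) = R (f α); rw [hfab]
      rw [this] at h
      exact (hψ_mem α hα).2 h
    · apply hfab
      rw [← hfψ α hα, ← hfρ β hβ, h]
  -- the family
  set g : X → E := fun x => b (ψ x) - b (ρ x) with hg
  -- cardinality of X
  have hXκ : Cardinal.mk X = κ := by
    have hcompl : Cardinal.mk ↥(Xᶜ) < Cardinal.mk ι := by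
      have hsub : Xᶜ ⊆ ⋃ (v : {v : L → F // (f ⁻¹' {v}).Finite}), f ⁻¹' {v.1} := by
        intro α hα
        have : (f ⁻¹' {f α}).Finite := Set.not_infinite.mp hα
        exact Set.mem_iUnion.mpr ⟨⟨f α, this⟩, hmem_fiber α⟩
      have h1 : Cardinal.mk ↥(Xᶜ) ≤
          Cardinal.mk {v : L → F // (f ⁻¹' {v}).Finite} *
            ⨆ (v : {v : L → F // (f ⁻¹' {v}).Finite}), Cardinal.mk (f ⁻¹' {v.1}) :=
        (Cardinal.mk_le_mk_of_subset hsub).trans (Cardinal.mk_iUnion_le _)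
      have h2 : (⨆ (v : {v : L → F // (f ⁻¹' {v}).Finite}), Cardinal.mk (f ⁻¹' {v.1})) ≤
          Cardinal.aleph0 := by
        apply ciSup_le'
        intro v
        haveI := v.2.to_subtype
        exact Cardinal.mk_le_aleph0
      have h3 : Cardinal.mk ↥(Xᶜ) ≤ Cardinal.mk F ^ lam * Cardinal.aleph0 := by
        refine h1.trans ?_
        exact mul_le_mul' (by rw [← hmkLF]; exact Cardinal.mk_subtype_le _) h2
      have h4 : Cardinal.mk F ^ lam * Cardinal.aleph0 = Cardinal.mk F ^ lam :=
        Cardinal.mul_eq_left hFlam_inf hFlam_inf Cardinal.aleph0_ne_zero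
      rw [h4] at h3
      rw [hκ]
      exact h3.trans_lt hbig
    have := Cardinal.mk_compl_of_infinite (Xᶜ) hcompl
    rw [compl_compl] at this
    rw [this, hκ]
  -- orthogonality
  have horth : ∀ x : X, g x ∈ ortho Φ (Submodule.span F (⇑b '' L)) := by
    intro x y hy
    have hker : Submodule.span F (⇑b '' L) ≤ LinearMap.ker (Φ (g x)) := by
      rw [Submodule.span_le]
      rintro z ⟨β, hβ, rfl⟩
      rw [SetLike.mem_coe, LinearMap.mem_ker]
      have h1 : Φ (b (ψ x)) (b β) = f (ψ ↑x) ⟨β, hβ⟩ := rfl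
      have h2 : Φ (b (ρ x)) (b β) = f (ρ ↑x) ⟨β, hβ⟩ := rfl
      have e1 : f (ψ ↑x) ⟨β, hβ⟩ = f ↑x ⟨β, hβ⟩ := congrFun (hfψ x x.2) _
      have e2 : f (ρ ↑x) ⟨β, hβ⟩ = f ↑x ⟨β, hβ⟩ := congrFun (hfρ x x.2) _
      show Φ (b (ψ x) - b (ρ x)) (b β) = 0
      rw [map_sub, LinearMap.sub_apply, h1, h2, e1, e2, sub_self]
    exact LinearMap.mem_ker.mp (hker hy)
  -- linear independence
  have hli : LinearIndependent F g := by
    rw [linearIndependent_iff']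
    intro s c hsum i₀ hi₀
    have hterm : ∀ i ∈ s, (b.coord (ψ ↑i₀)) (c i • g i) = if i = i₀ then c i else 0 := by
      intro i _
      rw [map_smul, hg]
      show c i • (b.coord (ψ ↑i₀)) (b (ψ ↑i) - b (ρ ↑i)) = _
      rw [map_sub]
      have hρ0 : (b.coord (ψ ↑i₀)) (b (ρ ↑i)) = 0 := by
        rw [Module.Basis.coord_apply, Module.Basis.repr_self_apply, if_neg]
        exact fun h => hψρ ↑i₀ i₀.2 ↑i i.2 h.symm
      rw [hρ0, sub_zero, Module.Basis.coord_apply, Module.Basis.repr_self_apply]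
      by_cases h : i = i₀
      · subst h
        rw [if_pos rfl, if_pos rfl, smul_eq_mul, mul_one]
      · have hne : ψ ↑i ≠ ψ ↑i₀ := fun hcontra =>
          h (Subtype.ext (hψ_inj ↑i i.2 ↑i₀ i₀.2 hcontra))
        rw [if_neg hne, if_neg h, smul_zero]
    have h0 := congrArg (b.coord (ψ ↑i₀)) hsum
    rw [map_sum, map_zero] at h0
    rw [Finset.sum_congr rfl hterm, Finset.sum_ite_eq' s i₀ c, if_pos hi₀] at h0
    exact h0
  -- the main existence statement
  have main : (∃ (X : Set ι) (g : X → E), Cardinal.mk X = κ ∧ LinearIndependent F g ∧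
      (∀ x, ∃ α ∈ X, ∃ β ∈ X, g x = b α - b β) ∧
      (∀ x, g x ∈ ortho Φ (Submodule.span F (⇑b '' L)))) :=
    ⟨X, g, hXκ, hli, fun x => ⟨ψ ↑x, hψX ↑x x.2, ρ ↑x, hρX ↑x x.2, rfl⟩, horth⟩
  refine ⟨main, ?_⟩
  intro hG
  set U : Submodule F E := Submodule.span F (⇑b '' L) with hU
  have hrankU : Module.rank F U = lam := by
    have hli' : LinearIndependent F (fun β : L => b ↑β) :=
      b.linearIndependent.comp Subtype.val Subtype.val_injective
    have himg : ⇑b '' L = Set.range (fun β : L => b ↑β) := (Set.image_eq_range _ _)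
    rw [hU, himg, rank_span hli',
      Cardinal.mk_range_eq (fun β : L => b ↑β)
        (fun x y h => Subtype.val_injective (b.injective h)), hLcard]
  have hlt := hG U (le_of_eq hrankU.symm)
  -- κ-many independent vectors inside the orthogonal complement
  set g' : X → ↥(ortho Φ U) := fun x => ⟨g x, horth x⟩ with hg'
  have hli'' : LinearIndependent F g' := by
    apply LinearIndependent.of_comp (ortho Φ U).subtype
    exact hli
  have hrank_ortho : κ ≤ Module.rank F (ortho Φ U) := by
    rw [← hXκ]
    exact hli''.cardinal_le_rank
  have hrankE : Module.rank F E = κ := by rw [← b.mk_eq_rank'', hκ]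
  rw [hrankE] at hlt
  exact absurd hlt (not_lt.mpr hrank_ortho)
end

section
/- Let F be a finite field, κ a cardinal of uncountable cofinality, and suppose ⟨y_n : n < ω⟩ are vectors in a symmetric bilinear space E of dimension κ with basis ⟨e_α : α < κ⟩. For α < κ define f_α : ω → F by f_α(n) = Φ(e_α, y_n). If there is an infinite set A ⊆ ω such that for every α < κ and every a ∈ F, either A ⊆* f_α^{-1}{a} or A ∩ f_α^{-1}{a} is finite, then there are a ∈ F, n < ω, and X ⊆ κ of cardinality κ such that for all α ∈ X, f_α is constantly a on A \ n; consequently every difference e_α − e_β with α, β ∈ X lies in span⟨y_m : m ∈ A \ n⟩^⊥. -/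
universe u

/-- Stabilization of an unsplit set: if an infinite A ⊆ ω is not split by any of the
partitions induced by f_α(n) = Φ(e_α, y_n) over a finite field, and κ has uncountable
cofinality, then on a set X of κ-many indices the functions are constantly a on A \ n,
and all differences of basis vectors with indices in X are orthogonal to
span⟨y_m : m ∈ A \ n⟩. -/
theorem unsplit_stabilization {F E : Type u} [Field F] [Finite F]
    [AddCommGroup E] [Module F E] {ι : Type u}
    (b : Module.Basis ι F E) (Φ : E →ₗ[F] E →ₗ[F] F) (hsymm : ∀ x y, Φ x y = Φ y x)
    (κ : Cardinal.{u}) (hκ : Cardinal.mk ι = κ)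
    (hcof : Cardinal.aleph0 < κ.ord.cof)
    (y : ℕ → E) (A : Set ℕ) (hA : A.Infinite)
    (hunsplit : ∀ α : ι, ∀ a : F,
      (A \ {n | Φ (b α) (y n) = a}).Finite ∨ (A ∩ {n | Φ (b α) (y n) = a}).Finite) :
    ∃ (a : F) (n : ℕ) (X : Set ι), Cardinal.mk X = κ ∧
      (∀ α ∈ X, ∀ m ∈ A, n ≤ m → Φ (b α) (y m) = a) ∧
      (∀ α ∈ X, ∀ β ∈ X,
        b α - b β ∈ ortho Φ (Submodule.span F (y '' {m | m ∈ A ∧ n ≤ m}))) := by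
  classical
  -- For each α, pick a value a with infinite intersection, hence cofinite restriction.
  have key : ∀ α : ι, ∃ p : F × ULift.{u} ℕ,
      ∀ m ∈ A, p.2.down ≤ m → Φ (b α) (y m) = p.1 := by
    intro α
    have hex : ∃ a : F, (A ∩ {n | Φ (b α) (y n) = a}).Infinite := by
      by_contra! h
      have : A ⊆ ⋃ a : F, A ∩ {n | Φ (b α) (y n) = a} := by
        intro m hm
        exact Set.mem_iUnion.2 ⟨Φ (b α) (y m), hm, rfl⟩
      exact hA ((Set.finite_iUnion h).subset this)
    obtain ⟨a, ha⟩ := hex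
    have hfin : (A \ {n | Φ (b α) (y n) = a}).Finite := by
      rcases hunsplit α a with h | h
      · exact h
      · exact (ha h).elim
    obtain ⟨N, hN⟩ := hfin.bddAbove
    refine ⟨(a, ⟨N + 1⟩), ?_⟩
    intro m hm hle
    by_contra hne
    have : m ∈ A \ {n | Φ (b α) (y n) = a} := ⟨hm, hne⟩
    have h1 : m ≤ N := hN this
    have h2 : N + 1 ≤ m := hle
    omega
  choose g hg using key
  -- pigeonhole
  have hι : Cardinal.aleph0 ≤ Cardinal.mk ι := by
    rw [hκ]
    exact le_trans hcof.le (Ordinal.cof_ord_le κ)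
  have hsmall : Cardinal.mk (F × ULift.{u} ℕ) < (Cardinal.mk ι).ord.cof := by
    rw [hκ]
    exact lt_of_le_of_lt (Cardinal.mk_le_aleph0) hcof
  obtain ⟨⟨a, n⟩, hfiber⟩ := Cardinal.infinite_pigeonhole g hι hsmall
  refine ⟨a, n.down, g ⁻¹' {(a, n)}, by rw [hfiber, hκ], ?_, ?_⟩
  · intro α hα m hm hle
    have := hg α m hm (by rw [show g α = (a, n) from hα]; exact hle)
    rwa [show g α = (a, n) from hα] at this
  · intro α hα β hβ
    intro v hv
    have hle : Submodule.span F (y '' {m | m ∈ A ∧ n.down ≤ m}) ≤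
        LinearMap.ker (Φ (b α - b β)) := by
      rw [Submodule.span_le]
      rintro _ ⟨m, ⟨hm, hle⟩, rfl⟩
      have h1 := hg α m hm (by rw [show g α = (a, n) from hα]; exact hle)
      have h2 := hg β m hm (by rw [show g β = (a, n) from hβ]; exact hle)
      rw [show g α = (a, n) from hα] at h1
      rw [show g β = (a, n) from hβ] at h2
      simp [LinearMap.mem_ker, map_sub, h1, h2]
    exact hle hv
end

section
/- Assume cof(ℳ) = ω₁, where ℳ is the ideal of meagre subsets of 2^ω. Then there exists a family ⟨r_α : α < ω₁⟩ of elements of 2^ω such that for every n and every meagre set A ⊆ (2^ω)^n there exists α < ω₁ such that for all α < α₁ < … < α_n < ω₁, the tuple ⟨r_{α₁},…,r_{α_n}⟩ ∉ A. -/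
/-- The cofinality of the meagre ideal on 2^ω: the least cardinality of a family of
meagre sets cofinal under inclusion among all meagre sets. -/
noncomputable def cofMeagre : Cardinal :=
  sInf { c | ∃ 𝓕 : Set (Set (ℕ → Bool)), Cardinal.mk 𝓕 = c ∧
    (∀ A ∈ 𝓕, IsMeagre A) ∧ ∀ A : Set (ℕ → Bool), IsMeagre A → ∃ B ∈ 𝓕, A ⊆ B }


open Set TopologicalSpace
universe u

section KU
variable {α β : Type*} [TopologicalSpace α] [TopologicalSpace β]

lemma IsNowhereDense.isMeagre' {s : Set α} (hs : IsNowhereDense s) : IsMeagre s :=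
  isMeagre_iff_countable_union_isNowhereDense.mpr
    ⟨{s}, by simpa using hs, countable_singleton s, by simp⟩

lemma isMeagre_iUnion' {ι : Sort*} [Countable ι] {s : ι → Set α}
    (hs : ∀ i, IsMeagre (s i)) : IsMeagre (⋃ i, s i) := by
  rw [IsMeagre, compl_iUnion]
  exact countable_iInter_mem.mpr hs

lemma ku_nwd [SecondCountableTopology β] {F : Set (α × β)} (hF : IsClosed F)
    (hnwd : IsNowhereDense F) :
    IsMeagre {x : α | ¬ IsNowhereDense (Prod.mk x ⁻¹' F)} := by
  obtain ⟨hUo, hUd⟩ := isClosed_isNowhereDense_iff_compl.mp ⟨hF, hnwd⟩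
  set U := Fᶜ with hU
  obtain ⟨b, hbc, -, hbB⟩ := exists_countable_basis β
  set W : Set β → Set α := fun V => Prod.fst '' (U ∩ univ ×ˢ V) with hW
  have hWmem : ∀ V, ∀ x : α, x ∈ W V ↔ ∃ y ∈ V, (x, y) ∈ U := by
    intro V x
    constructor
    · rintro ⟨⟨x', y⟩, ⟨hy1, -, hy2⟩, rfl⟩
      exact ⟨y, hy2, hy1⟩
    · rintro ⟨y, hyV, hyU⟩
      exact ⟨(x, y), ⟨hyU, trivial, hyV⟩, rfl⟩
  have hWo : ∀ V : Set β, IsOpen V → IsOpen (W V) := fun V hV =>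
    isOpenMap_fst _ (hUo.inter (isOpen_univ.prod hV))
  have hWd : ∀ V : Set β, V.Nonempty → IsOpen V → Dense (W V) := by
    intro V hVne hVo
    rw [dense_iff_inter_open]
    intro G hGo hGne
    have : (G ×ˢ V ∩ U).Nonempty :=
      hUd.inter_open_nonempty _ (hGo.prod hVo) (hGne.prod hVne)
    obtain ⟨p, ⟨hp1, hp2⟩, hp3⟩ := this
    exact ⟨p.1, hp1, (hWmem V p.1).mpr ⟨p.2, hp2, hp3⟩⟩
  set R : Set α := ⋂ V ∈ {V ∈ b | V.Nonempty}, W V with hR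
  have hRres : R ∈ residual α := by
    refine (countable_bInter_mem (hbc.mono (sep_subset _ _))).mpr ?_
    rintro V ⟨hVb, hVne⟩
    exact residual_of_dense_open (hWo V (hbB.isOpen hVb)) (hWd V hVne (hbB.isOpen hVb))
  have key : ∀ x ∈ R, IsNowhereDense (Prod.mk x ⁻¹' F) := by
    intro x hx
    have hdense : Dense (Prod.mk x ⁻¹' U) := by
      rw [hbB.dense_iff]
      intro V hVb hVne
      have hxW : x ∈ W V := mem_iInter₂.mp hx V ⟨hVb, hVne⟩
      obtain ⟨y, hyV, hyU⟩ := (hWmem V x).mp hxW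
      exact ⟨y, hyV, hyU⟩
    have hcompl : (Prod.mk x ⁻¹' F)ᶜ = Prod.mk x ⁻¹' U := rfl
    exact (isClosed_isNowhereDense_iff_compl.mpr
      ⟨hcompl ▸ (hUo.preimage (Continuous.prodMk_right x)), hcompl ▸ hdense⟩).2
  have hRc : IsMeagre Rᶜ := by
    show Rᶜᶜ ∈ residual α
    rwa [compl_compl]
  refine hRc.mono ?_
  intro x hx
  simp only [mem_setOf_eq] at hx
  intro hxR
  exact hx (key x hxR)

lemma ku_meagre [SecondCountableTopology β] {A : Set (α × β)} (hA : IsMeagre A) :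
    IsMeagre {x : α | ¬ IsMeagre (Prod.mk x ⁻¹' A)} := by
  obtain ⟨S, hSnwd, hSc, hSsub⟩ := isMeagre_iff_countable_union_isNowhereDense.mp hA
  set T : Set (Set (α × β)) := insert ∅ (closure '' S) with hT
  have hTne : T.Nonempty := ⟨∅, mem_insert _ _⟩
  have hTc : T.Countable := (hSc.image _).insert _
  have hTprop : ∀ t ∈ T, IsClosed t ∧ IsNowhereDense t := by
    rintro t (rfl | ⟨s, hs, rfl⟩)
    · exact ⟨isClosed_empty, isNowhereDense_empty⟩
    · exact ⟨isClosed_closure, (hSnwd s hs).closure⟩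
  obtain ⟨f, hf⟩ := hTc.exists_eq_range hTne
  have hcover : A ⊆ ⋃ n, f n := by
    refine hSsub.trans ?_
    rintro p ⟨s, hs, hp⟩
    have : closure s ∈ T := mem_insert_iff.mpr (Or.inr ⟨s, hs, rfl⟩)
    rw [hf] at this
    obtain ⟨n, hn⟩ := this
    exact mem_iUnion.mpr ⟨n, hn ▸ subset_closure hp⟩
  have hfprop : ∀ n, IsClosed (f n) ∧ IsNowhereDense (f n) := fun n =>
    hTprop (f n) (hf ▸ mem_range_self n)
  have hbad : IsMeagre (⋃ n, {x : α | ¬ IsNowhereDense (Prod.mk x ⁻¹' (f n))}) :=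
    isMeagre_iUnion' fun n => ku_nwd (hfprop n).1 (hfprop n).2
  refine hbad.mono ?_
  intro x hx
  simp only [mem_setOf_eq] at hx
  by_contra hnot
  simp only [mem_iUnion, mem_setOf_eq, not_exists, not_not] at hnot
  apply hx
  have hsub : Prod.mk x ⁻¹' A ⊆ ⋃ n, Prod.mk x ⁻¹' (f n) := by
    rw [← preimage_iUnion]
    exact preimage_mono hcover
  exact (isMeagre_iUnion' fun n => (hnot n).isMeagre').mono hsub

end KU

lemma homeo_isMeagre {α β : Type*} [TopologicalSpace α] [TopologicalSpace β]
    (e : α ≃ₜ β) {s : Set β} : IsMeagre (e ⁻¹' s) ↔ IsMeagre s := by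
  constructor
  · intro h
    have := h.preimage_of_isOpenMap e.symm.continuous e.symm.isOpenMap
    rwa [← preimage_comp, e.self_comp_symm, preimage_id] at this
  · intro h
    exact h.preimage_of_isOpenMap e.continuous e.isOpenMap

/-- `Fin.cons` as a homeomorphism. -/
def finConsHomeo {n : ℕ} {Z : Type*} [TopologicalSpace Z] :
    (Fin (n + 1) → Z) ≃ₜ Z × (Fin n → Z) where
  toFun f := (f 0, fun i => f i.succ)
  invFun p := Fin.cons p.1 p.2
  left_inv f := by
    ext i
    refine Fin.cases ?_ (fun j => ?_) i <;> simp
  right_inv p := by ext i <;> simp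
  continuous_toFun := by
    refine Continuous.prodMk (continuous_apply 0) ?_
    exact continuous_pi fun i => continuous_apply i.succ
  continuous_invFun := by
    refine continuous_pi fun i => ?_
    refine Fin.cases ?_ (fun j => ?_) i
    · exact continuous_fst.congr fun p => by simp
    · exact ((continuous_apply j).comp continuous_snd).congr fun p => by simp

abbrev XX := ℕ → Bool
abbrev YY (n : ℕ) := Fin n → XX

noncomputable def curryHomeo (n : ℕ) : (Fin n → XX) ≃ₜ (Fin n × ℕ → Bool) where
  toEquiv := (Equiv.curry _ _ _).symm
  continuous_toFun := continuous_pi fun p =>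
    (continuous_apply p.2).comp (continuous_apply p.1)
  continuous_invFun := continuous_pi fun i => continuous_pi fun m => continuous_apply (i, m)

noncomputable def homeoXn (n : ℕ) : YY (n + 1) ≃ₜ XX := by
  haveI : Denumerable (Fin (n+1) × ℕ) := Denumerable.ofEncodableOfInfinite _
  exact (curryHomeo (n+1)).trans
    (Homeomorph.piCongrLeft (Y := fun _ : ℕ => Bool) (Denumerable.eqv (Fin (n+1) × ℕ)))

/-- Section of a set in `YY (n+1)` at a first coordinate. -/
def sectA {n : ℕ} (A : Set (YY (n + 1))) (x : XX) : Set (YY n) := {y | Fin.cons x y ∈ A}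

/-- The set of first coordinates whose section is non-meagre. -/
def badA {n : ℕ} (A : Set (YY (n + 1))) : Set XX := {x | ¬ IsMeagre (sectA A x)}

lemma badA_meagre {n : ℕ} {A : Set (YY (n + 1))} (hA : IsMeagre A) : IsMeagre (badA A) := by
  set e : (XX × YY n) ≃ₜ YY (n + 1) := (finConsHomeo (n := n) (Z := XX)).symm
  have hA' : IsMeagre (e ⁻¹' A) := (homeo_isMeagre e).mpr hA
  have : badA A = {x : XX | ¬ IsMeagre (Prod.mk x ⁻¹' (e ⁻¹' A))} := rfl
  rw [this]
  exact ku_meagre hA'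

abbrev II : Type (u + 1) := {o : Ordinal.{u} // o < (Cardinal.aleph 1).ord}

lemma countable_ordinal_lt {v : Ordinal.{u}} (hv : v < (Cardinal.aleph 1).ord) :
    Countable {o : Ordinal.{u} // o < v} := by
  have h1 : Cardinal.mk (Set.Iio v) = Cardinal.lift.{u+1} v.card := Ordinal.mk_Iio_ordinal v
  have h2 : v.card < Cardinal.aleph 1 := Cardinal.lt_ord.mp hv
  have h3 : Cardinal.mk (Set.Iio v) < Cardinal.aleph 1 := by
    rw [h1]; exact Cardinal.lift_lt_aleph_one.mpr h2
  exact Set.countable_coe_iff.mpr ((Cardinal.countable_iff_lt_aleph_one _).mpr h3)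

lemma countable_lt (α : II.{u}) : Countable {β : II.{u} // β < α} := by
  haveI := countable_ordinal_lt α.2
  refine Function.Injective.countable
    (f := fun β : {β : II.{u} // β < α} => (⟨β.1.1, β.2⟩ : {o : Ordinal.{u} // o < α.1})) ?_
  rintro ⟨⟨b, hb⟩, h⟩ ⟨⟨c, hc⟩, h'⟩ heq
  simpa using congrArg Subtype.val heq

lemma countable_le (α : II.{u}) : Countable {β : II.{u} // β ≤ α} := by
  have hsucc : α.1 + 1 < (Cardinal.aleph 1).ord := by
    rw [Cardinal.lt_ord]
    have h2 : α.1.card < Cardinal.aleph 1 := Cardinal.lt_ord.mp α.2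
    have h1 : α.1.card ≤ Cardinal.aleph0 := by
      refine Order.lt_succ_iff.mp ?_
      rwa [Cardinal.succ_aleph0]
    have h0 : (α.1 + 1).card = α.1.card + 1 := by simp
    rw [h0]
    calc α.1.card + 1 ≤ Cardinal.aleph0 + 1 := add_le_add_left h1 1
      _ = Cardinal.aleph0 := Cardinal.add_one_eq le_rfl
      _ < Cardinal.aleph 1 := Cardinal.aleph0_lt_aleph_one
  haveI := countable_ordinal_lt hsucc
  refine Function.Injective.countable
    (f := fun β : {β : II.{u} // β ≤ α} =>
      (⟨β.1.1, ?_⟩ : {o : Ordinal.{u} // o < α.1 + 1})) ?_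
  · have : β.1.1 ≤ α.1 := β.2
    exact lt_of_le_of_lt this (lt_add_one _)
  · rintro ⟨⟨b, hb⟩, h⟩ ⟨⟨c, hc⟩, h'⟩ heq
    simpa using congrArg Subtype.val heq


inductive Code (α : II.{u}) : Type (u + 1) where
  | base : ℕ → {γ : II.{u} // γ ≤ α} → Code α
  | bad : Code α → Code α
  | sec : Code α → {β : II.{u} // β < α} → Code α

noncomputable def codeEnc {α : II.{u}} (f1 : {γ : II.{u} // γ ≤ α} → ℕ)
    (f2 : {β : II.{u} // β < α} → ℕ) : Code α → ℕ
  | .base n γ => Nat.pair 0 (Nat.pair n (f1 γ))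
  | .bad c => Nat.pair 1 (codeEnc f1 f2 c)
  | .sec c β => Nat.pair 2 (Nat.pair (codeEnc f1 f2 c) (f2 β))

lemma codeEnc_inj {α : II.{u}} {f1 : {γ : II.{u} // γ ≤ α} → ℕ}
    {f2 : {β : II.{u} // β < α} → ℕ} (h1 : Function.Injective f1)
    (h2 : Function.Injective f2) : Function.Injective (codeEnc f1 f2) := by
  intro c1
  induction c1 with
  | base n γ =>
    intro c2 h
    cases c2 <;> simp [codeEnc, Nat.pair_eq_pair] at h
    rw [h.1, h1 h.2]
  | bad c ih =>
    intro c2 h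
    cases c2 <;> simp [codeEnc, Nat.pair_eq_pair] at h
    rw [ih h]
  | sec c β ih =>
    intro c2 h
    cases c2 <;> simp [codeEnc, Nat.pair_eq_pair] at h
    rw [ih h.1, h2 h.2]



instance codeCountable (α : II.{u}) : Countable (Code α) := by
  haveI := countable_lt α
  haveI := countable_le α
  obtain ⟨f1, hf1⟩ := Countable.exists_injective_nat {γ : II.{u} // γ ≤ α}
  obtain ⟨f2, hf2⟩ := Countable.exists_injective_nat {β : II.{u} // β < α}
  exact ⟨⟨codeEnc f1 f2, codeEnc_inj hf1 hf2⟩⟩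

section Eval
variable (M : II.{u} → Set XX)

open Classical in
noncomputable def evalC (r : II.{u} → XX) {α : II.{u}} : Code α → (Σ n : ℕ, Set (YY n))
  | .base n γ => ⟨n + 1, (homeoXn n) ⁻¹' (M γ.1)⟩
  | .bad c =>
      match evalC r c with
      | ⟨0, _⟩ => ⟨1, ∅⟩
      | ⟨n + 1, A⟩ => ⟨1, (fun y : YY 1 => y 0) ⁻¹' badA A⟩
  | .sec c β =>
      match evalC r c with
      | ⟨0, _⟩ => ⟨0, ∅⟩
      | ⟨n + 1, A⟩ => ⟨n, if IsMeagre (sectA A (r β.1)) then sectA A (r β.1) else ∅⟩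

noncomputable def evalX (r : II.{u} → XX) {α : II.{u}} (c : Code α) : Set XX :=
  match evalC M r c with
  | ⟨1, A⟩ => {x : XX | (fun _ : Fin 1 => x) ∈ A}
  | _ => ∅

lemma evalC_meagre (hM : ∀ γ, IsMeagre (M γ)) (r : II.{u} → XX) {α : II.{u}} (c : Code α) :
    IsMeagre (evalC M r c).2 := by
  induction c with
  | base n γ => exact (homeo_isMeagre (homeoXn n)).mpr (hM γ.1)
  | bad c ih =>
    rw [evalC]
    rcases hE : evalC M r c with ⟨m, A⟩
    match m, A with
    | 0, A => exact IsMeagre.empty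
    | n + 1, A =>
      have hA : IsMeagre A := by rw [hE] at ih; exact ih
      have hbad : IsMeagre (badA A) := badA_meagre hA
      exact (homeo_isMeagre (α := YY 1) (β := XX) (Homeomorph.funUnique (Fin 1) XX)).mpr hbad
  | sec c β ih =>
    rw [evalC]
    rcases hE : evalC M r c with ⟨m, A⟩
    match m, A with
    | 0, A => exact IsMeagre.empty
    | n + 1, A =>
      by_cases h : IsMeagre (sectA A (r β.1))
      · simpa [h] using h
      · simp [h, IsMeagre.empty]

lemma evalX_meagre (hM : ∀ γ, IsMeagre (M γ)) (r : II.{u} → XX) {α : II.{u}} (c : Code α) :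
    IsMeagre (evalX M r c) := by
  have h := evalC_meagre M hM r c
  rw [evalX]
  rcases hE : evalC M r c with ⟨m, A⟩
  match m, A with
  | 0, A => exact IsMeagre.empty
  | 1, A =>
    have hA : IsMeagre A := by rw [hE] at h; exact h
    exact (homeo_isMeagre (Homeomorph.funUnique (Fin 1) XX).symm).mpr hA
  | (n + 2), A => exact IsMeagre.empty

noncomputable def avoidSet (r : II.{u} → XX) (α : II.{u}) : Set XX :=
  ⋃ c : Code α, evalX M r c

lemma avoidSet_meagre (hM : ∀ γ, IsMeagre (M γ)) (r : II.{u} → XX) (α : II.{u}) :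
    IsMeagre (avoidSet M r α) :=
  isMeagre_iUnion' fun c => evalX_meagre M hM r c

lemma compl_nonempty {s : Set XX} (h : IsMeagre s) : sᶜ.Nonempty :=
  (dense_of_mem_residual h).nonempty

lemma evalC_congr {α : II.{u}} (r r' : II.{u} → XX) (hrr : ∀ β : II.{u}, β < α → r β = r' β)
    (c : Code α) : evalC M r c = evalC M r' c := by
  induction c with
  | base n γ => rfl
  | bad c ih => rw [evalC, evalC, ih]
  | sec c β ih => rw [evalC, evalC, ih, hrr β.1 β.2]

lemma avoidSet_congr {α : II.{u}} (r r' : II.{u} → XX) (hrr : ∀ β : II.{u}, β < α → r β = r' β) :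
    avoidSet M r α = avoidSet M r' α := by
  unfold avoidSet
  exact Set.iUnion_congr fun c => by unfold evalX; rw [evalC_congr M r r' hrr c]

noncomputable def rfun (hM : ∀ γ, IsMeagre (M γ)) : II.{u} → XX :=
  (IsWellFounded.wf (α := II.{u}) (r := (· < ·))).fix fun α rec =>
    (compl_nonempty (avoidSet_meagre M hM
      (fun β => if h : β < α then rec β h else default) α)).choose

lemma rfun_spec (hM : ∀ γ, IsMeagre (M γ)) (α : II.{u}) :
    rfun M hM α ∉ avoidSet M (rfun M hM) α := by
  have hfix := WellFounded.fix_eq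
    (IsWellFounded.wf (α := II.{u}) (r := (· < ·)))
    (fun α (rec : ∀ β : II.{u}, β < α → XX) =>
      (compl_nonempty (avoidSet_meagre M hM
        (fun β => if h : β < α then rec β h else default) α)).choose) α
  set r' : II.{u} → XX := fun β => if h : β < α then rfun M hM β else default with hr'
  have hchoose := (compl_nonempty (avoidSet_meagre M hM r' α)).choose_spec
  have heq : rfun M hM α = (compl_nonempty (avoidSet_meagre M hM r' α)).choose := hfix
  rw [heq]
  have hagree : ∀ β : II.{u}, β < α → r' β = rfun M hM β := by
    intro β hβ
    simp [hr', hβ]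
  rw [avoidSet_congr M (rfun M hM) r' (fun β hβ => (hagree β hβ).symm)]
  exact hchoose

def Code.lift {α α' : II.{u}} (h : α ≤ α') : Code α → Code α'
  | .base n γ => .base n ⟨γ.1, γ.2.trans h⟩
  | .bad c => .bad (c.lift h)
  | .sec c β => .sec (c.lift h) ⟨β.1, lt_of_lt_of_le β.2 h⟩

lemma evalC_lift (r : II.{u} → XX) {α α' : II.{u}} (h : α ≤ α') (c : Code α) :
    evalC M r (c.lift h) = evalC M r c := by
  induction c with
  | base n γ => rfl
  | bad c ih => rw [Code.lift, evalC, evalC, ih]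
  | sec c β ih => rw [Code.lift, evalC, evalC, ih]

lemma main_lemma (hM : ∀ γ, IsMeagre (M γ)) :
    ∀ (n : ℕ) {α : II.{u}} (c : Code α) (A : Set (YY (n + 1))),
      evalC M (rfun M hM) c = ⟨n + 1, A⟩ →
      ∀ g : Fin (n + 1) → II.{u}, StrictMono g → α ≤ g 0 →
        (fun i => rfun M hM (g i)) ∉ A := by
  intro n
  induction n with
  | zero =>
    intro α c A hc g hg hα
    set r := rfun M hM with hr
    have hspec := rfun_spec M hM (g 0)
    set c' := c.lift hα with hc'
    have hev : evalC M r c' = ⟨1, A⟩ := by rw [hc', evalC_lift M r hα c, hc]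
    have hX : evalX M r c' = {x : XX | (fun _ : Fin 1 => x) ∈ A} := by
      unfold evalX
      rw [hev]
      rfl
    have hmem : r (g 0) ∉ evalX M r c' := by
      intro hmem
      exact hspec (Set.mem_iUnion.mpr ⟨c', hmem⟩)
    rw [hX] at hmem
    intro hA
    apply hmem
    have : (fun i : Fin 1 => r (g i)) = (fun _ : Fin 1 => r (g 0)) := by
      funext i
      rw [Fin.fin_one_eq_zero i]
    rw [this] at hA
    exact hA
  | succ n ih =>
    intro α c A hc g hg hα
    set r := rfun M hM with hr
    have h01 : (0 : Fin (n + 2)) < 1 := by simp [Fin.lt_def]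
    have hg01 : g 0 < g 1 := hg h01
    have hα1 : α ≤ g 1 := hα.trans hg01.le
    -- step 1 : the bad set
    set c0 := c.lift hα with hc0
    have hev0 : evalC M r c0 = ⟨n + 2, A⟩ := by rw [hc0, evalC_lift M r hα c, hc]
    have hevbad : evalC M r (Code.bad c0) = ⟨1, (fun y : YY 1 => y 0) ⁻¹' badA A⟩ := by
      rw [evalC, hev0]
    have hXbad : evalX M r (Code.bad c0) = badA A := by
      unfold evalX
      rw [hevbad]
      rfl
    have hnotbad : r (g 0) ∉ badA A := by
      have hspec := rfun_spec M hM (g 0)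
      intro hmem
      exact hspec (Set.mem_iUnion.mpr ⟨Code.bad c0, hXbad ▸ hmem⟩)
    have hsect : IsMeagre (sectA A (r (g 0))) := not_not.mp hnotbad
    -- step 2 : the section code at level g 1
    set c1 := c.lift hα1 with hc1
    have hev1 : evalC M r c1 = ⟨n + 2, A⟩ := by rw [hc1, evalC_lift M r hα1 c, hc]
    set c2 := Code.sec c1 ⟨g 0, hg01⟩ with hc2
    have hev2 : evalC M r c2 = ⟨n + 1, sectA A (r (g 0))⟩ := by
      rw [hc2, evalC, hev1]
      simp [hsect]
    -- step 3 : apply IH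
    have hIH := ih c2 (sectA A (r (g 0))) hev2 (fun i => g i.succ)
      (hg.comp (Fin.strictMono_succ)) (le_refl (g 1))
    intro hA
    apply hIH
    show (fun i : Fin (n + 1) => r (g i.succ)) ∈ sectA A (r (g 0))
    show Fin.cons (r (g 0)) (fun i : Fin (n + 1) => r (g i.succ)) ∈ A
    have : Fin.cons (r (g 0)) (fun i : Fin (n + 1) => r (g i.succ))
        = (fun i : Fin (n + 2) => r (g i)) := by
      funext i
      refine Fin.cases ?_ (fun j => ?_) i <;> simp
    rw [this]
    exact hA

lemma meagre_YY0 {A : Set (YY 0)} (hA : IsMeagre A) : A = ∅ := by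
  haveI : Subsingleton (YY 0) := ⟨fun a b => funext fun i => i.elim0⟩
  by_contra hne
  obtain ⟨a, ha⟩ := Set.nonempty_iff_ne_empty.mpr hne
  obtain ⟨b, hb⟩ := (dense_of_mem_residual hA).nonempty
  exact hb (Subsingleton.elim b a ▸ ha)

end Eval

lemma mk_II : Cardinal.mk II.{u} = Cardinal.lift.{u+1} (Cardinal.aleph.{u} 1) := by
  have h1 : Cardinal.mk (Set.Iio ((Cardinal.aleph.{u} 1).ord))
      = Cardinal.lift.{u+1} ((Cardinal.aleph.{u} 1).ord).card :=
    Ordinal.mk_Iio_ordinal _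
  rw [Cardinal.card_ord] at h1
  rw [← h1]
  exact Cardinal.mk_congr (Equiv.subtypeEquivRight fun o => Iff.rfl)


/-- If cof(ℳ) = ω₁ then there is an ω₁-sequence of reals in 2^ω such that every meagre
subset of (2^ω)^n is eventually avoided by all increasing n-tuples from the sequence. -/
theorem exists_sequence_avoiding_meagre_sets
    (h : cofMeagre = Cardinal.aleph 1) :
    ∃ r : {o : Ordinal // o < (Cardinal.aleph 1).ord} → (ℕ → Bool),
      ∀ (n : ℕ) (A : Set (Fin n → (ℕ → Bool))), IsMeagre A →
        ∃ α : {o : Ordinal // o < (Cardinal.aleph 1).ord},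
          ∀ g : Fin n → {o : Ordinal // o < (Cardinal.aleph 1).ord},
            StrictMono g → (∀ i, α < g i) → (fun i => r (g i)) ∉ A := by
  -- extract a cofinal family of size ℵ₁
  have hne : { c | ∃ 𝓕 : Set (Set (ℕ → Bool)), Cardinal.mk 𝓕 = c ∧
      (∀ A ∈ 𝓕, IsMeagre A) ∧
      ∀ A : Set (ℕ → Bool), IsMeagre A → ∃ B ∈ 𝓕, A ⊆ B }.Nonempty := by
    refine ⟨Cardinal.mk {A : Set (ℕ → Bool) | IsMeagre A}, {A | IsMeagre A}, rfl, ?_, ?_⟩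
    · exact fun A hA => hA
    · exact fun A hA => ⟨A, hA, subset_refl A⟩
  have hmem := csInf_mem hne
  rw [show sInf { c | ∃ 𝓕 : Set (Set (ℕ → Bool)), Cardinal.mk 𝓕 = c ∧
      (∀ A ∈ 𝓕, IsMeagre A) ∧
      ∀ A : Set (ℕ → Bool), IsMeagre A → ∃ B ∈ 𝓕, A ⊆ B } = cofMeagre from rfl, h] at hmem
  obtain ⟨𝓕, hmk, hmeag, hcof⟩ := hmem
  -- an enumeration of the family by II
  have hequiv : Nonempty (II ≃ ↥𝓕) := by
    rw [← Cardinal.lift_mk_eq']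
    rw [hmk, mk_II]
    simp [Cardinal.lift_aleph, Cardinal.lift_lift]
  obtain ⟨e⟩ := hequiv
  set M : II → Set XX := fun γ => (e γ).1 with hMdef
  have hM : ∀ γ, IsMeagre (M γ) := fun γ => hmeag _ (e γ).2
  have hcof' : ∀ A : Set XX, IsMeagre A → ∃ γ : II, A ⊆ M γ := by
    intro A hA
    obtain ⟨B, hB, hAB⟩ := hcof A hA
    refine ⟨e.symm ⟨B, hB⟩, ?_⟩
    rw [hMdef]
    simp only [Equiv.apply_symm_apply]
    exact hAB
  -- the sequence
  refine ⟨rfun M hM, ?_⟩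
  intro n A hA
  match n, A, hA with
  | 0, A, hA =>
    refine ⟨⟨0, ?_⟩, ?_⟩
    · rw [Cardinal.lt_ord]
      simpa using Cardinal.aleph0_lt_aleph_one.trans_le' (by simp)
    · intro g hg hgt
      rw [meagre_YY0 hA]
      exact Set.notMem_empty _
  | (n + 1), A, hA =>
    -- dominate A by a set in the family, via the homeomorphism
    have hA' : IsMeagre ((homeoXn n).symm ⁻¹' A) := (homeo_isMeagre (homeoXn n).symm).mpr hA
    obtain ⟨γ, hγ⟩ := hcof' _ hA'
    refine ⟨γ, ?_⟩
    intro g hg hgt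
    have hsub : A ⊆ (homeoXn n) ⁻¹' (M γ) := by
      intro y hy
      have hx : (homeoXn n) y ∈ (homeoXn n).symm ⁻¹' A := by simpa using hy
      exact hγ hx
    have hmain := main_lemma M hM n (Code.base n ⟨γ, le_refl γ⟩) ((homeoXn n) ⁻¹' (M γ))
      rfl g hg (le_of_lt (hgt 0))
    exact fun hmem => hmain (hsub hmem)
end

section
/- There exists a family ⟨h_α : α < ω₁⟩ of one-to-one functions h_α : α → ω such that ω \ ran(h_α) is infinite for every α, and for all β < α < ω₁ the set {γ < β : h_β(γ) ≠ h_α(γ)} is finite. -/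
namespace CoherentSeqAux
universe u
open Set

theorem ord_not_lt_zero (o : Ordinal.{u}) : ¬ o < 0 := not_lt_of_ge (zero_le (a := o))

def Good (α : Ordinal.{u}) (f : Ordinal.{u} → ℕ) : Prop :=
  Set.InjOn f (Set.Iio α) ∧ ((f '' Set.Iio α)ᶜ : Set ℕ).Infinite

def Coh (β : Ordinal.{u}) (f g : Ordinal.{u} → ℕ) : Prop :=
  {γ : Ordinal.{u} | γ < β ∧ f γ ≠ g γ}.Finite

lemma countable_Iio {o : Ordinal.{u}} (h : o < (Cardinal.aleph 1).ord) :
    (Set.Iio o).Countable := by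
  rw [Cardinal.countable_iff_lt_aleph_one, Ordinal.mk_Iio_ordinal]
  have h1 : o.card ≤ Cardinal.aleph0 := by
    have := Cardinal.lt_ord.mp h
    rwa [← Cardinal.succ_aleph0, Order.lt_succ_iff] at this
  calc Cardinal.lift.{u+1} o.card ≤ Cardinal.lift.{u+1} Cardinal.aleph0 :=
        Cardinal.lift_le.mpr h1
    _ = Cardinal.aleph0 := Cardinal.lift_aleph0
    _ < Cardinal.aleph 1 := Cardinal.aleph0_lt_aleph_one

lemma exists_cofinal {α : Ordinal.{u}} (hα : α < (Cardinal.aleph 1).ord)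
    (hl : Order.IsSuccLimit α) :
    ∃ b : ℕ → Ordinal.{u}, b 0 = 0 ∧ (∀ n, b n < b (n + 1)) ∧ (∀ n, b n < α) ∧
      ∀ γ < α, ∃ n, γ < b n := by
  have hc : (Set.Iio α).Countable := countable_Iio hα
  have hne : (Set.Iio α).Nonempty := ⟨0, hl.pos⟩
  obtain ⟨c, hc⟩ := hc.exists_eq_range hne
  have hcmem : ∀ n, c n < α := fun n => by
    have : c n ∈ Set.Iio α := hc ▸ Set.mem_range_self n
    exact this
  refine ⟨fun n => Nat.rec 0 (fun n ih => Order.succ (max ih (c n))) n, rfl, ?_, ?_, ?_⟩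
  · intro n
    exact lt_of_le_of_lt (le_max_left _ _) (Order.lt_succ _)
  · intro n
    induction n with
    | zero => exact hl.pos
    | succ n ih =>
      exact hl.succ_lt (max_lt ih (hcmem n))
  · intro γ hγ
    have : γ ∈ Set.range c := hc ▸ hγ
    obtain ⟨n, rfl⟩ := this
    exact ⟨n + 1, lt_of_le_of_lt (le_max_right _ _) (Order.lt_succ _)⟩


/-- invariant of the finite stages of the amalgamation at a limit -/
def St (g : Ordinal.{u} → Ordinal.{u} → ℕ) (b : ℕ → Ordinal.{u}) (n : ℕ)
    (f : Ordinal.{u} → ℕ) (A : Finset ℕ) : Prop :=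
  Set.InjOn f (Set.Iio (b n)) ∧ {γ : Ordinal.{u} | γ < b n ∧ f γ ≠ g (b n) γ}.Finite ∧
    (∀ x ∈ A, x ∉ f '' Set.Iio (b n)) ∧ A.card = n

lemma base {g : Ordinal.{u} → Ordinal.{u} → ℕ} {b : ℕ → Ordinal.{u}} (hb0 : b 0 = 0) :
    St g b 0 (fun _ => 0) ∅ := by
  have hIio : Set.Iio (b 0) = ∅ := by
    rw [hb0]; ext x; simp [ord_not_lt_zero]
  refine ⟨?_, ?_, ?_, rfl⟩
  · rw [hIio]; exact Set.injOn_empty _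
  · apply Set.Finite.subset (Set.finite_empty)
    rintro γ ⟨h1, _⟩
    exact absurd h1 (by rw [hb0] at h1 ⊢; exact (ord_not_lt_zero γ h1).elim)
  · intro x hx; simp at hx

lemma step {α : Ordinal.{u}} {g : Ordinal.{u} → Ordinal.{u} → ℕ} {b : ℕ → Ordinal.{u}}
    (hg : ∀ β < α, Good β (g β))
    (hco : ∀ β γ, γ < β → β < α → Coh γ (g γ) (g β))
    (hb : ∀ n, b n < b (n + 1)) (hbα : ∀ n, b n < α)
    (n : ℕ) (f : Ordinal.{u} → ℕ) (A : Finset ℕ) (hS : St g b n f A) :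
    ∃ p : (Ordinal.{u} → ℕ) × Finset ℕ, St g b (n + 1) p.1 p.2 ∧
      (∀ γ, γ < b n → p.1 γ = f γ) ∧ A ⊆ p.2 := by
  classical
  obtain ⟨hinj, hnear, hdisj, hcard⟩ := hS
  obtain ⟨hGinj, hGinf⟩ := hg (b (n + 1)) (hbα (n + 1))
  set G : Ordinal.{u} → ℕ := g (b (n + 1)) with hGdef
  -- the finite set where f differs from G below b n
  set D : Set Ordinal.{u} := {γ | γ < b n ∧ f γ ≠ G γ} with hDdef
  have hDsub : D ⊆ Set.Iio (b n) := fun γ hγ => hγ.1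
  have hDfin : D.Finite := by
    apply Set.Finite.subset (hnear.union (hco (b (n + 1)) (b n) (hb n) (hbα (n + 1))))
    rintro γ ⟨h1, h2⟩
    by_cases hx : f γ = g (b n) γ
    · exact Or.inr ⟨h1, fun he => h2 (hx.trans he)⟩
    · exact Or.inl ⟨h1, hx⟩
  have hnotD : ∀ γ, γ < b n → γ ∉ D → f γ = G γ := fun γ h1 h2 =>
    not_not.mp (fun hne => h2 ⟨h1, hne⟩)
  have hfD : (f '' D).Finite := hDfin.image f
  have hfsub : f '' Set.Iio (b n) ⊆ (G '' Set.Iio (b (n + 1))) ∪ f '' D := by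
    rintro x ⟨γ, hγ, rfl⟩
    by_cases hγD : γ ∈ D
    · exact Or.inr ⟨γ, hγD, rfl⟩
    · exact Or.inl ⟨γ, hγ.trans (hb n), (hnotD γ hγ hγD).symm⟩
  -- choose the new avoided value
  have hbig : (((G '' Set.Iio (b (n + 1)))ᶜ : Set ℕ) \ (f '' D ∪ ↑A)).Infinite :=
    hGinf.diff (hfD.union A.finite_toSet)
  obtain ⟨newa, hnewa⟩ := hbig.nonempty
  have hnewa1 : newa ∉ G '' Set.Iio (b (n + 1)) := hnewa.1
  have hnewa2 : newa ∉ f '' D := fun h => hnewa.2 (Or.inl h)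
  have hnewa3 : newa ∉ A := fun h => hnewa.2 (Or.inr h)
  -- bad values, collision set
  set T : Set ℕ := f '' D ∪ ↑A ∪ {newa} with hTdef
  have hTfin : T.Finite := (hfD.union A.finite_toSet).union (Set.finite_singleton _)
  set C : Set Ordinal.{u} := {δ | b n ≤ δ ∧ δ < b (n + 1) ∧ G δ ∈ T} with hCdef
  have hCfin : C.Finite := by
    have hGC : Set.InjOn G C := hGinj.mono (fun δ hδ => hδ.2.1)
    exact Set.Finite.of_finite_image
      (hTfin.subset (by rintro x ⟨δ, hδ, rfl⟩; exact hδ.2.2)) hGC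
  -- fresh values for rerouting collisions
  set Fresh : Set ℕ := ((G '' Set.Iio (b (n + 1)))ᶜ : Set ℕ) \ T with hFrdef
  have hFrInf : Fresh.Infinite := hGinf.diff hTfin
  obtain ⟨ι, hι⟩ := Set.countable_iff_exists_injective.mp hCfin.countable
  set e := hFrInf.natEmbedding with hedef
  set r : Ordinal.{u} → ℕ := fun δ => if h : δ ∈ C then (e (ι ⟨δ, h⟩)).1 else 0 with hrdef
  have hrFresh : ∀ δ, δ ∈ C → r δ ∈ Fresh := by
    intro δ h
    simp only [hrdef, dif_pos h]
    exact (e (ι ⟨δ, h⟩)).2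
  have hrinj : Set.InjOn r C := by
    intro x hx y hy hxy
    simp only [hrdef, dif_pos hx, dif_pos hy] at hxy
    have := e.injective (Subtype.ext hxy)
    have := hι this
    exact congrArg Subtype.val this
  -- the new function
  set f' : Ordinal.{u} → ℕ :=
    fun δ => if δ < b n then f δ else if δ ∈ C then r δ else G δ with hf'def
  have hval_lo : ∀ γ, γ < b n → f' γ = f γ := by
    intro γ h; simp only [hf'def, if_pos h]
  have hval_mid : ∀ δ, δ ∈ C → f' δ = r δ := by
    intro δ h
    simp only [hf'def, if_neg (not_lt.mpr h.1), if_pos h]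
  have hval_hi : ∀ δ, ¬δ < b n → δ ∉ C → f' δ = G δ := by
    intro δ h1 h2; simp only [hf'def, if_neg h1, if_neg h2]
  -- classification of f-values
  have hfclass : ∀ γ, γ < b n → f γ ∈ (G '' Set.Iio (b (n + 1))) ∪ f '' D :=
    fun γ h => hfsub ⟨γ, h, rfl⟩
  refine ⟨(f', insert newa A), ⟨?_, ?_, ?_, ?_⟩, hval_lo, Finset.subset_insert _ _⟩
  · -- injectivity
    dsimp only
    intro x hx y hy hxy
    simp only [Set.mem_Iio] at hx hy
    by_cases hx1 : x < b n <;> by_cases hy1 : y < b n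
    · rw [hval_lo x hx1, hval_lo y hy1] at hxy
      exact hinj hx1 hy1 hxy
    · by_cases hy2 : y ∈ C
      · exfalso
        rw [hval_lo x hx1, hval_mid y hy2] at hxy
        have hfr := hrFresh y hy2
        rw [← hxy] at hfr
        rcases hfclass x hx1 with h | h
        · exact hfr.1 h
        · exact hfr.2 (Or.inl (Or.inl h))
      · rw [hval_lo x hx1, hval_hi y hy1 hy2] at hxy
        have hGyT : G y ∉ T := fun h => hy2 ⟨not_lt.mp hy1, hy, h⟩
        by_cases hxD : x ∈ D
        · exact absurd (hxy ▸ Or.inl (Or.inl ⟨x, hxD, rfl⟩)) hGyT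
        · have : f x = G x := hnotD x hx1 hxD
          exact hGinj (Set.mem_Iio.mpr (hx1.trans (hb n))) (Set.mem_Iio.mpr hy)
            (this ▸ hxy)
    · by_cases hx2 : x ∈ C
      · exfalso
        rw [hval_lo y hy1, hval_mid x hx2] at hxy
        have hfr := hrFresh x hx2
        rw [hxy] at hfr
        rcases hfclass y hy1 with h | h
        · exact hfr.1 h
        · exact hfr.2 (Or.inl (Or.inl h))
      · rw [hval_lo y hy1, hval_hi x hx1 hx2] at hxy
        have hGxT : G x ∉ T := fun h => hx2 ⟨not_lt.mp hx1, hx, h⟩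
        by_cases hyD : y ∈ D
        · exact absurd (hxy ▸ Or.inl (Or.inl ⟨y, hyD, rfl⟩)) hGxT
        · have : f y = G y := hnotD y hy1 hyD
          exact hGinj (Set.mem_Iio.mpr hx) (Set.mem_Iio.mpr (hy1.trans (hb n)))
            (hxy.trans this)
    · by_cases hx2 : x ∈ C <;> by_cases hy2 : y ∈ C
      · rw [hval_mid x hx2, hval_mid y hy2] at hxy
        exact hrinj hx2 hy2 hxy
      · exfalso
        rw [hval_mid x hx2, hval_hi y hy1 hy2] at hxy
        exact (hrFresh x hx2).1 (hxy ▸ ⟨y, Set.mem_Iio.mpr hy, rfl⟩)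
      · exfalso
        rw [hval_mid y hy2, hval_hi x hx1 hx2] at hxy
        exact (hrFresh y hy2).1 (hxy ▸ ⟨x, Set.mem_Iio.mpr hx, rfl⟩)
      · rw [hval_hi x hx1 hx2, hval_hi y hy1 hy2] at hxy
        exact hGinj (Set.mem_Iio.mpr hx) (Set.mem_Iio.mpr hy) hxy
  · -- near: f' close to g (b (n+1))
    dsimp only
    apply Set.Finite.subset (hDfin.union hCfin)
    rintro γ ⟨hγ, hne⟩
    by_cases h1 : γ < b n
    · by_cases h2 : γ ∈ D
      · exact Or.inl h2
      · exact absurd ((hval_lo γ h1).trans (hnotD γ h1 h2)) hne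
    · by_cases h2 : γ ∈ C
      · exact Or.inr h2
      · exact absurd (hval_hi γ h1 h2) hne
  · -- disjointness from the avoided set
    dsimp only
    intro x hx hmem
    obtain ⟨γ, hγ, hfx⟩ := hmem
    simp only [Finset.mem_insert] at hx
    simp only [Set.mem_Iio] at hγ
    by_cases h1 : γ < b n
    · rw [hval_lo γ h1] at hfx
      rcases hx with rfl | hx
      · rcases hfclass γ h1 with h | h
        · exact hnewa1 (hfx ▸ h)
        · exact hnewa2 (hfx ▸ h)
      · exact hdisj x hx ⟨γ, h1, hfx⟩
    · by_cases h2 : γ ∈ C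
      · rw [hval_mid γ h2] at hfx
        have hfr := hrFresh γ h2
        rw [hfx] at hfr
        rcases hx with rfl | hx
        · exact hfr.2 (Or.inr rfl)
        · exact hfr.2 (Or.inl (Or.inr hx))
      · rw [hval_hi γ h1 h2] at hfx
        have hGT : G γ ∉ T := fun h => h2 ⟨not_lt.mp h1, hγ, h⟩
        rcases hx with rfl | hx
        · exact hGT (hfx ▸ Or.inr rfl)
        · exact hGT (hfx ▸ Or.inl (Or.inr hx))
  · -- cardinality
    dsimp only
    rw [Finset.card_insert_of_notMem hnewa3, hcard]

section Rec
variable {α : Ordinal.{u}} {g : Ordinal.{u} → Ordinal.{u} → ℕ} {b : ℕ → Ordinal.{u}}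
variable (hg : ∀ β < α, Good β (g β))
  (hco : ∀ β γ, γ < β → β < α → Coh γ (g γ) (g β))
  (hb : ∀ n, b n < b (n + 1)) (hbα : ∀ n, b n < α) (hb0 : b 0 = 0)

noncomputable def FF : ∀ n : ℕ, {p : (Ordinal.{u} → ℕ) × Finset ℕ // St g b n p.1 p.2}
  | 0 => ⟨(fun _ => 0, ∅), base hb0⟩
  | (n + 1) =>
    ⟨(step hg hco hb hbα n (FF n).1.1 (FF n).1.2 (FF n).2).choose,
     (step hg hco hb hbα n (FF n).1.1 (FF n).1.2 (FF n).2).choose_spec.1⟩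

lemma FF_succ_ext (n : ℕ) :
    (∀ γ, γ < b n → (FF hg hco hb hbα hb0 (n + 1)).1.1 γ = (FF hg hco hb hbα hb0 n).1.1 γ) ∧
      (FF hg hco hb hbα hb0 n).1.2 ⊆ (FF hg hco hb hbα hb0 (n + 1)).1.2 :=
  (step hg hco hb hbα n _ _ (FF hg hco hb hbα hb0 n).2).choose_spec.2

include hb in
lemma bmono {m k : ℕ} (h : m ≤ k) : b m ≤ b k :=
  monotone_nat_of_le_succ (fun i => (hb i).le) h

lemma FF_stable {m k : ℕ} (h : m ≤ k) :
    (∀ γ, γ < b m → (FF hg hco hb hbα hb0 k).1.1 γ = (FF hg hco hb hbα hb0 m).1.1 γ) ∧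
      (FF hg hco hb hbα hb0 m).1.2 ⊆ (FF hg hco hb hbα hb0 k).1.2 := by
  induction k, h using Nat.le_induction with
  | base => exact ⟨fun γ _ => rfl, subset_rfl⟩
  | succ k hmk ih =>
    refine ⟨fun γ hγ => ?_, ih.2.trans (FF_succ_ext hg hco hb hbα hb0 k).2⟩
    have h1 := (FF_succ_ext hg hco hb hbα hb0 k).1 γ (lt_of_lt_of_le hγ (bmono hb hmk))
    exact h1.trans (ih.1 γ hγ)

end Rec

lemma limit_case {α : Ordinal.{u}} (hα : α < (Cardinal.aleph 1).ord) (hl : Order.IsSuccLimit α)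
    (g : Ordinal.{u} → Ordinal.{u} → ℕ)
    (hg : ∀ β < α, Good β (g β))
    (hco : ∀ β γ, γ < β → β < α → Coh γ (g γ) (g β)) :
    ∃ f, Good α f ∧ ∀ β < α, Coh β (g β) f := by
  classical
  obtain ⟨b, hb0, hb, hbα, hcof⟩ := exists_cofinal hα hl
  set FFn := FF hg hco hb hbα hb0 with hFFn
  set f : Ordinal.{u} → ℕ :=
    fun γ => if h : ∃ n, γ < b n then (FFn (Nat.find h)).1.1 γ else 0 with hfdef
  have hfeq : ∀ m γ, γ < b m → f γ = (FFn m).1.1 γ := by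
    intro m γ hγ
    have hex : ∃ n, γ < b n := ⟨m, hγ⟩
    have h1 : Nat.find hex ≤ m := Nat.find_le hγ
    have h2 : γ < b (Nat.find hex) := Nat.find_spec hex
    simp only [hfdef, dif_pos hex]
    exact ((FF_stable hg hco hb hbα hb0 h1).1 γ h2).symm
  refine ⟨f, ⟨?_, ?_⟩, ?_⟩
  · -- injectivity
    intro x hx y hy hxy
    simp only [Set.mem_Iio] at hx hy
    obtain ⟨m1, hm1⟩ := hcof x hx
    obtain ⟨m2, hm2⟩ := hcof y hy
    have hxm : x < b (max m1 m2) := lt_of_lt_of_le hm1 (bmono hb (le_max_left _ _))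
    have hym : y < b (max m1 m2) := lt_of_lt_of_le hm2 (bmono hb (le_max_right _ _))
    rw [hfeq _ x hxm, hfeq _ y hym] at hxy
    exact (FFn (max m1 m2)).2.1 (Set.mem_Iio.mpr hxm) (Set.mem_Iio.mpr hym) hxy
  · -- coinfinite range
    set S : Set ℕ := {x | ∃ n, x ∈ (FFn n).1.2} with hSdef
    have hSsub : S ⊆ (f '' Set.Iio α)ᶜ := by
      rintro x ⟨n, hn⟩ ⟨γ, hγ, hfx⟩
      simp only [Set.mem_Iio] at hγ
      obtain ⟨m, hm⟩ := hcof γ hγ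
      have hγk : γ < b (max n m) := lt_of_lt_of_le hm (bmono hb (le_max_right _ _))
      have hxk : x ∈ (FFn (max n m)).1.2 :=
        (FF_stable hg hco hb hbα hb0 (le_max_left n m)).2 hn
      rw [hfeq _ γ hγk] at hfx
      exact (FFn (max n m)).2.2.2.1 x hxk ⟨γ, Set.mem_Iio.mpr hγk, hfx⟩
    have hSinf : S.Infinite := by
      intro hfin
      have hn : ∀ n : ℕ, n ≤ hfin.toFinset.card := by
        intro n
        rw [← (FFn n).2.2.2.2]
        apply Finset.card_le_card
        intro x hx
        rw [Set.Finite.mem_toFinset]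
        exact ⟨n, hx⟩
      exact absurd (hn (hfin.toFinset.card + 1)) (by omega)
    exact hSinf.mono hSsub
  · -- coherence
    intro β hβ
    obtain ⟨m, hm⟩ := hcof β hβ
    apply Set.Finite.subset (((FFn m).2.2.1).union (hco (b m) β hm (hbα m)))
    rintro γ ⟨hγ, hne⟩
    by_cases h1 : (FFn m).1.1 γ = g (b m) γ
    · refine Or.inr ⟨hγ, fun he => hne ?_⟩
      rw [he, ← h1, ← hfeq _ γ (hγ.trans hm)]
    · exact Or.inl ⟨hγ.trans hm, h1⟩

lemma zero_case (g : Ordinal.{u} → Ordinal.{u} → ℕ) :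
    ∃ f, Good (0 : Ordinal.{u}) f ∧ ∀ β < (0 : Ordinal.{u}), Coh β (g β) f := by
  have hIio : Set.Iio (0 : Ordinal.{u}) = ∅ := by
    ext x; simp [ord_not_lt_zero]
  refine ⟨fun _ => 0, ⟨?_, ?_⟩, ?_⟩
  · rw [hIio]; exact Set.injOn_empty _
  · rw [hIio, Set.image_empty, Set.compl_empty]
    exact Set.infinite_univ
  · intro β hβ
    exact absurd hβ (ord_not_lt_zero β)

lemma succ_case {s : Ordinal.{u}} (g : Ordinal.{u} → Ordinal.{u} → ℕ)
    (hg : ∀ β < Order.succ s, Good β (g β))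
    (hco : ∀ β γ, γ < β → β < Order.succ s → Coh γ (g γ) (g β)) :
    ∃ f, Good (Order.succ s) f ∧ ∀ β < Order.succ s, Coh β (g β) f := by
  classical
  obtain ⟨hinj, hinf⟩ := hg s (Order.lt_succ s)
  obtain ⟨n, hn⟩ := hinf.nonempty
  refine ⟨fun γ => if γ = s then n else g s γ, ⟨?_, ?_⟩, ?_⟩
  · intro x hx y hy hxy
    simp only [Set.mem_Iio, Order.lt_succ_iff] at hx hy
    dsimp only at hxy
    by_cases hxs : x = s <;> by_cases hys : y = s
    · rw [hxs, hys]
    · exfalso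
      rw [if_pos hxs, if_neg hys] at hxy
      exact hn ⟨y, Set.mem_Iio.mpr (lt_of_le_of_ne hy hys), hxy.symm⟩
    · exfalso
      rw [if_pos hys, if_neg hxs] at hxy
      exact hn ⟨x, Set.mem_Iio.mpr (lt_of_le_of_ne hx hxs), hxy⟩
    · rw [if_neg hxs, if_neg hys] at hxy
      exact hinj (Set.mem_Iio.mpr (lt_of_le_of_ne hx hxs))
        (Set.mem_Iio.mpr (lt_of_le_of_ne hy hys)) hxy
  · have hsub : (fun γ => if γ = s then n else g s γ) '' Set.Iio (Order.succ s) ⊆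
        insert n (g s '' Set.Iio s) := by
      rintro x ⟨γ, hγ, rfl⟩
      simp only [Set.mem_Iio, Order.lt_succ_iff] at hγ
      dsimp only
      by_cases hγs : γ = s
      · rw [if_pos hγs]; exact Set.mem_insert _ _
      · rw [if_neg hγs]
        exact Set.mem_insert_of_mem _ ⟨γ, Set.mem_Iio.mpr (lt_of_le_of_ne hγ hγs), rfl⟩
    have h2 : ((insert n (g s '' Set.Iio s))ᶜ : Set ℕ).Infinite := by
      have he : ((insert n (g s '' Set.Iio s))ᶜ : Set ℕ) = (g s '' Set.Iio s)ᶜ \ {n} := by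
        ext x; simp only [Set.mem_compl_iff, Set.mem_insert_iff, Set.mem_diff,
          Set.mem_singleton_iff]; tauto
      rw [he]
      exact hinf.diff (Set.finite_singleton n)
    exact h2.mono (Set.compl_subset_compl.mpr hsub)
  · intro β hβ
    rw [Order.lt_succ_iff] at hβ
    have hsub : {γ : Ordinal.{u} | γ < β ∧ g β γ ≠ if γ = s then n else g s γ} ⊆
        {γ : Ordinal.{u} | γ < β ∧ g β γ ≠ g s γ} := by
      rintro γ ⟨hγ, hne⟩
      have hγs : γ ≠ s := fun h => (not_lt.mpr hβ) (h ▸ hγ)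
      rw [if_neg hγs] at hne
      exact ⟨hγ, hne⟩
    rcases lt_or_eq_of_le hβ with hβs | rfl
    · exact Set.Finite.subset (hco s β hβs (Order.lt_succ s)) hsub
    · apply Set.Finite.subset (Set.finite_empty)
      intro γ hγ
      exact absurd rfl (hsub hγ).2

lemma ext_lemma (α : Ordinal.{u}) (hα : α < (Cardinal.aleph 1).ord)
    (g : Ordinal.{u} → Ordinal.{u} → ℕ)
    (hg : ∀ β < α, Good β (g β))
    (hco : ∀ β γ, γ < β → β < α → Coh γ (g γ) (g β)) :
    ∃ f, Good α f ∧ ∀ β < α, Coh β (g β) f := by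
  rcases Ordinal.zero_or_succ_or_isSuccLimit α with rfl | ⟨s, rfl⟩ | hl
  · exact zero_case g
  · exact succ_case g hg hco
  · exact limit_case hα hl g hg hco

open Classical in
noncomputable def Phi : ∀ _ : Ordinal.{u},
    (Ordinal.{u} → (Ordinal.{u} → ℕ)) → (Ordinal.{u} → ℕ) :=
  fun α prev =>
    if h : ∃ f, Good α f ∧ ∀ β < α, Coh β (prev β) f then h.choose else fun _ => 0

noncomputable def HH : Ordinal.{u} → Ordinal.{u} → ℕ :=
  Ordinal.lt_wf.fix (fun α ih => Phi α (fun β => if h : β < α then ih β h else fun _ => 0))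

lemma HH_eq (α : Ordinal.{u}) :
    HH α = Phi α (fun β => if _ : β < α then HH β else fun _ => 0) :=
  Ordinal.lt_wf.fix_eq _ α

lemma HH_good : ∀ α : Ordinal.{u}, α < (Cardinal.aleph 1).ord →
    Good α (HH α) ∧ ∀ β < α, Coh β (HH β) (HH α) := by
  intro α
  induction α using Ordinal.induction with
  | h α IH =>
    intro hα
    have hex : ∃ f, Good α f ∧
        ∀ β < α, Coh β ((fun β => if _ : β < α then HH β else fun _ => 0) β) f := by
      obtain ⟨f, h1, h2⟩ := ext_lemma α hα HH
        (fun β hβ => (IH β hβ (hβ.trans hα)).1)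
        (fun β γ hγβ hβα => (IH β hβα (hβα.trans hα)).2 γ hγβ)
      refine ⟨f, h1, fun β hβ => ?_⟩
      simp only [dif_pos hβ]
      exact h2 β hβ
    have key : Good α (HH α) ∧
        ∀ β < α, Coh β ((fun β => if _ : β < α then HH β else fun _ => 0) β) (HH α) := by
      rw [HH_eq]
      unfold Phi
      split
      · next h => exact ⟨h.choose_spec.1, h.choose_spec.2⟩
      · next h => exact absurd hex h
    refine ⟨key.1, fun β hβ => ?_⟩
    have := key.2 β hβ
    simpa only [dif_pos hβ] using this

end CoherentSeqAux

/-- Todorcevic's coherent sequence: there is a family ⟨h_α : α < ω₁⟩ of injections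
h_α : α → ω with coinfinite range, coherent modulo finite. -/
theorem exists_coherent_injections :
    ∃ h : {o : Ordinal // o < (Cardinal.aleph 1).ord} → Ordinal → ℕ,
      (∀ α, Set.InjOn (h α) (Set.Iio α.val)) ∧
      (∀ α, ((h α '' Set.Iio α.val)ᶜ : Set ℕ).Infinite) ∧
      (∀ α β : {o : Ordinal // o < (Cardinal.aleph 1).ord}, β.val < α.val →
        {γ : Ordinal | γ < β.val ∧ h β γ ≠ h α γ}.Finite) := by
  refine ⟨fun α => CoherentSeqAux.HH α.val, ?_, ?_, ?_⟩
  · exact fun α => (CoherentSeqAux.HH_good α.val α.2).1.1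
  · exact fun α => (CoherentSeqAux.HH_good α.val α.2).1.2
  · exact fun α β hβ => (CoherentSeqAux.HH_good α.val α.2).2 β.val hβ
end

section
/- Let λ be an infinite cardinal. There exists a family ⟨A^α_γ : γ < λ⁺, α < λ⁺⁺⟩ of sets of size ≤ λ such that for all α, β < λ⁺⁺ and γ, δ < λ⁺: (1) ⟨A^α_γ : γ < λ⁺⟩ is increasing and continuous with union α and A^α_0 = ∅; (2) if γ < δ then A^α_γ ⊆ A^α_δ; (3) if α < β and α ∈ A^β_γ then A^α_γ = A^β_γ ∩ α. -/
namespace CoherentFiltration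
open Ordinal Cardinal Set
open scoped Classical

noncomputable section

/-- Property of a family of "index sets" `D γ` used to define the filtration at a
non-successor ordinal `α` as a union of coherent earlier filtrations. -/
def PD (lam : Cardinal.{0}) (α : Ordinal.{0})
    (f' : Ordinal.{0} → Ordinal.{0} → Set Ordinal.{0})
    (D : Ordinal.{0} → Set Ordinal.{0}) : Prop :=
  (∀ γ : Ordinal, ∀ β ∈ D γ, β < α) ∧
  (∀ γ δ : Ordinal, γ ≤ δ → D γ ⊆ D δ) ∧
  (∀ γ : Ordinal, Order.IsSuccLimit γ → ∀ β ∈ D γ, ∃ δ < γ, β ∈ D δ) ∧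
  D 0 = ∅ ∧
  (∀ γ < (Order.succ lam).ord, Cardinal.mk (D γ) ≤ Cardinal.lift.{1} lam) ∧
  (∀ ξ < α, ∃ γ < (Order.succ lam).ord, ∃ β ∈ D γ, ξ ∈ f' β γ) ∧
  (∀ γ < (Order.succ lam).ord, ∀ β ∈ D γ, ∀ β' ∈ D γ, β < β' → β ∈ f' β' γ)

def fcut (α : Ordinal.{0}) (f : ∀ β, β < α → Ordinal.{0} → Set Ordinal.{0}) :
    Ordinal.{0} → Ordinal.{0} → Set Ordinal.{0} :=
  fun β γ => if h : β < α then f β h γ else ∅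

def stepF (lam : Cardinal.{0}) (α : Ordinal.{0})
    (f : ∀ β, β < α → Ordinal.{0} → Set Ordinal.{0}) : Ordinal.{0} → Set Ordinal.{0} :=
  if h : ∃ β, α = β + 1 then
    fun γ => if γ = 0 then ∅ else insert h.choose (fcut α f h.choose γ)
  else
    fun γ => ⋃ β ∈ (if hD : ∃ D, PD lam α (fcut α f) D then hD.choose
        else fun _ => (∅ : Set Ordinal.{0})) γ, fcut α f β γ

def Afam (lam : Cardinal.{0}) : Ordinal.{0} → Ordinal.{0} → Set Ordinal.{0} :=
  WellFounded.fix wellFounded_lt (stepF lam)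

lemma Afam_eq (lam : Cardinal.{0}) (α : Ordinal.{0}) :
    Afam lam α = stepF lam α (fun β _ => Afam lam β) :=
  WellFounded.fix_eq _ _ _

/-- the previous-values function seen by stage `α`. -/
def fprev (lam : Cardinal.{0}) (α : Ordinal.{0}) : Ordinal.{0} → Ordinal.{0} → Set Ordinal.{0} :=
  fcut α (fun β _ => Afam lam β)

lemma fprev_of_lt {lam α β} (h : β < α) (γ) : fprev lam α β γ = Afam lam β γ := by
  simp [fprev, fcut, h]

def Dch (lam : Cardinal.{0}) (α : Ordinal.{0}) : Ordinal.{0} → Set Ordinal.{0} :=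
  if hD : ∃ D, PD lam α (fprev lam α) D then hD.choose else fun _ => ∅

lemma Dch_spec {lam α} (h : ∃ D, PD lam α (fprev lam α) D) : PD lam α (fprev lam α) (Dch lam α) := by
  rw [Dch, dif_pos h]; exact h.choose_spec

lemma Afam_succ (lam : Cardinal.{0}) (β₀ γ : Ordinal.{0}) :
    Afam lam (β₀ + 1) γ = if γ = 0 then ∅ else insert β₀ (Afam lam β₀ γ) := by
  have h : ∃ β, β₀ + 1 = β + 1 := ⟨β₀, rfl⟩
  have hc : h.choose = β₀ := by
    have := h.choose_spec
    exact ((Ordinal.add_right_cancel 1).mp (by simpa using this)).symm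
  rw [Afam_eq, stepF, dif_pos h, hc]
  rcases eq_or_ne γ 0 with rfl | hγ
  · simp
  · rw [if_neg hγ, if_neg hγ, fcut, dif_pos (lt_add_one β₀)]

lemma Afam_not_succ {lam : Cardinal.{0}} {α : Ordinal.{0}} (h : ¬∃ β, α = β + 1) (γ : Ordinal.{0}) :
    Afam lam α γ = ⋃ β ∈ Dch lam α γ, fprev lam α β γ := by
  rw [Afam_eq, stepF, dif_neg h]
  rfl


/-! ### the level function and the `g` recursion used at limit stages -/

def lvl (f' : Ordinal.{0} → Ordinal.{0} → Set Ordinal.{0}) (K x y : Ordinal.{0}) : Ordinal.{0} :=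
  sInf {γ | γ < K ∧ min x y ∈ f' (max x y) γ}

lemma lvl_lt_K {f' K x y} (hK : (0:Ordinal.{0}) < K) : lvl f' K x y < K := by
  by_cases h : {γ | γ < K ∧ min x y ∈ f' (max x y) γ}.Nonempty
  · exact (csInf_mem h).1
  · rw [Set.not_nonempty_iff_eq_empty] at h
    rw [lvl, h, Ordinal.sInf_empty]
    exact hK

lemma lvl_mem {f' K x y} (h : ∃ γ, γ < K ∧ min x y ∈ f' (max x y) γ) :
    lvl f' K x y < K ∧ min x y ∈ f' (max x y) (lvl f' K x y) :=
  csInf_mem h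

def gfun (f' : Ordinal.{0} → Ordinal.{0} → Set Ordinal.{0}) (K : Ordinal.{0})
    (s : Ordinal.{0} → Ordinal.{0}) : Ordinal.{0} → Ordinal.{0} :=
  WellFounded.fix wellFounded_lt
    (fun j g => Ordinal.blsub j (fun k hk => max (g k hk) (lvl f' K (s k) (s j))))

lemma gfun_eq (f' K s j) :
    gfun f' K s j = Ordinal.blsub j (fun k _ => max (gfun f' K s k) (lvl f' K (s k) (s j))) :=
  WellFounded.fix_eq _ _ _

lemma gfun_lt_gfun {f' K s} {k j : Ordinal.{0}} (h : k < j) :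
    gfun f' K s k < gfun f' K s j := by
  rw [gfun_eq f' K s j]
  exact (le_max_left _ _).trans_lt (Ordinal.lt_blsub _ k h)

lemma lvl_lt_gfun {f' K s} {k j : Ordinal.{0}} (h : k < j) :
    lvl f' K (s k) (s j) < gfun f' K s j := by
  rw [gfun_eq f' K s j]
  exact (le_max_right _ _).trans_lt (Ordinal.lt_blsub _ k h)

lemma le_gfun {f' K s} (j : Ordinal.{0}) : j ≤ gfun f' K s j :=
  StrictMono.le_apply (fun _ _ h => gfun_lt_gfun h)


lemma main (lam : Cardinal.{0}) (hlam : Cardinal.aleph0 ≤ lam) :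
    ∀ α : Ordinal.{0}, α < (Order.succ (Order.succ lam)).ord →
      (∀ γ < (Order.succ lam).ord,
          Cardinal.mk (Afam lam α γ) ≤ Cardinal.lift.{1} lam ∧ Afam lam α γ ⊆ Set.Iio α) ∧
        Afam lam α 0 = ∅ ∧
        (⋃ γ ∈ Set.Iio (Order.succ lam).ord, Afam lam α γ) = Set.Iio α ∧
        (∀ γ δ : Ordinal, γ < δ → δ < (Order.succ lam).ord → Afam lam α γ ⊆ Afam lam α δ) ∧
        (∀ γ < (Order.succ lam).ord, Order.IsSuccLimit γ →
          Afam lam α γ = ⋃ δ ∈ Set.Iio γ, Afam lam α δ) ∧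
        (∀ β γ : Ordinal, γ < (Order.succ lam).ord → β < α → β ∈ Afam lam α γ →
          Afam lam β γ = Afam lam α γ ∩ Set.Iio β) := by
  have hKlim : Order.IsSuccLimit ((Order.succ lam).ord) :=
    Cardinal.isSuccLimit_ord (hlam.trans (Order.le_succ lam))
  have haddlt : ∀ x, x < (Order.succ lam).ord → x + 1 < (Order.succ lam).ord := fun x hx => by
    rw [Ordinal.add_one_eq_succ]; exact hKlim.succ_lt hx
  have hcardle : ∀ γ, γ < (Order.succ lam).ord →
      Cardinal.lift.{1} γ.card ≤ Cardinal.lift.{1} lam := fun γ hγ =>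
    Cardinal.lift_le.2 (Order.lt_succ_iff.mp (Cardinal.lt_ord.mp hγ))
  intro α
  induction α using Ordinal.induction with
  | _ α IH =>
  intro hα
  rcases Ordinal.zero_or_succ_or_isSuccLimit α with rfl | ⟨β₀, hs⟩ | hlim
  · -- zero case
    have hempty : ∀ γ, Afam lam 0 γ = ∅ := by
      intro γ
      rw [Afam_not_succ (by
        rintro ⟨β, hβ⟩
        exact absurd hβ.symm (by rw [Ordinal.add_one_eq_succ]; exact Ordinal.succ_ne_zero β)) γ]
      ext ξ
      simp [fprev, fcut, not_lt_zero]
    refine ⟨fun γ _ => ⟨by simp [hempty], by simp [hempty]⟩, hempty 0, ?_,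
      fun γ δ _ _ => by simp [hempty], fun γ _ _ => by simp [hempty],
      fun β γ _ hβ => absurd hβ (not_lt_zero (a := β))⟩
    ext ξ
    simp [hempty, not_lt_zero]
  · -- successor case
    rw [← Ordinal.add_one_eq_succ] at hs
    subst hs
    have hβ₀ : β₀ < β₀ + 1 := lt_add_one β₀
    obtain ⟨IH1, IH2, IH3, IH4, IH5, IH6⟩ := IH β₀ hβ₀ (hβ₀.trans hα)
    have hsub : ∀ γ, γ < (Order.succ lam).ord → Afam lam (β₀ + 1) γ ⊆ Set.Iio (β₀ + 1) := by
      intro γ hγ ξ hξ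
      rw [Afam_succ] at hξ
      rcases eq_or_ne γ 0 with rfl | hγ0
      · simp at hξ
      · rw [if_neg hγ0] at hξ
        rcases Set.mem_insert_iff.mp hξ with rfl | hξ
        · exact hβ₀
        · exact Set.mem_Iio.mpr (((IH1 γ hγ).2 hξ).trans hβ₀)
    have hmono : ∀ γ δ : Ordinal, γ < δ → δ < (Order.succ lam).ord →
        Afam lam (β₀ + 1) γ ⊆ Afam lam (β₀ + 1) δ := by
      intro γ δ hγδ hδ
      rw [Afam_succ, Afam_succ]
      rcases eq_or_ne γ 0 with rfl | hγ0
      · simp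
      · rw [if_neg hγ0, if_neg ((zero_le (a := γ)).trans_lt hγδ).ne']
        exact Set.insert_subset_insert (IH4 γ δ hγδ hδ)
    refine ⟨?_, ?_, ?_, hmono, ?_, ?_⟩
    · -- sizes and subset
      intro γ hγ
      refine ⟨?_, hsub γ hγ⟩
      rw [Afam_succ]
      rcases eq_or_ne γ 0 with rfl | hγ0
      · simp
      · rw [if_neg hγ0]
        calc Cardinal.mk (insert β₀ (Afam lam β₀ γ) : Set Ordinal)
            ≤ Cardinal.mk (Afam lam β₀ γ) + 1 := Cardinal.mk_insert_le
          _ ≤ Cardinal.lift.{1} lam + 1 := by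
              exact add_le_add_left ((IH1 γ hγ).1) 1
          _ = Cardinal.lift.{1} lam := Cardinal.add_one_eq (Cardinal.aleph0_le_lift.mpr hlam)
    · rw [Afam_succ]; simp
    · -- union
      ext ξ
      simp only [Set.mem_iUnion, Set.mem_Iio, exists_prop]
      constructor
      · rintro ⟨γ, hγ, hξ⟩
        exact hsub γ hγ hξ
      · intro hξ
        rcases (lt_or_eq_of_le (by
            rw [Ordinal.add_one_eq_succ] at hξ; exact Order.lt_succ_iff.mp hξ)) with hlt | rfl
        · have : ξ ∈ Set.Iio β₀ := hlt
          rw [← IH3] at this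
          simp only [Set.mem_iUnion, Set.mem_Iio, exists_prop] at this
          obtain ⟨γ, hγ, hmem⟩ := this
          refine ⟨γ + 1, haddlt γ hγ, ?_⟩
          rw [Afam_succ, if_neg (by
            intro h; exact (Ordinal.succ_ne_zero γ) (by rwa [← Ordinal.add_one_eq_succ]))]
          exact Set.mem_insert_of_mem _ (IH4 γ (γ + 1) (lt_add_one γ) (haddlt γ hγ) hmem)
        · refine ⟨1, Ordinal.one_lt_of_isSuccLimit hKlim, ?_⟩
          rw [Afam_succ, if_neg one_ne_zero]
          exact Set.mem_insert _ _
    · -- continuity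
      intro γ hγ hγlim
      apply subset_antisymm
      · intro ξ hξ
        rw [Afam_succ, if_neg hγlim.pos.ne'] at hξ
        simp only [Set.mem_iUnion, Set.mem_Iio, exists_prop]
        rcases Set.mem_insert_iff.mp hξ with rfl | hξ
        · refine ⟨1, Ordinal.one_lt_of_isSuccLimit hγlim, ?_⟩
          rw [Afam_succ, if_neg one_ne_zero]
          exact Set.mem_insert _ _
        · rw [IH5 γ hγ hγlim] at hξ
          simp only [Set.mem_iUnion, Set.mem_Iio, exists_prop] at hξ
          obtain ⟨δ, hδ, hmem⟩ := hξ
          have hδ1 : δ + 1 < γ := by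
            rw [Ordinal.add_one_eq_succ]; exact hγlim.succ_lt hδ
          refine ⟨δ + 1, hδ1, ?_⟩
          rw [Afam_succ, if_neg (by
            intro h; exact (Ordinal.succ_ne_zero δ) (by rwa [← Ordinal.add_one_eq_succ]))]
          exact Set.mem_insert_of_mem _ (IH4 δ (δ + 1) (lt_add_one δ) (hδ1.trans hγ) hmem)
      · intro ξ hξ
        simp only [Set.mem_iUnion, Set.mem_Iio, exists_prop] at hξ
        obtain ⟨δ, hδ, hmem⟩ := hξ
        exact hmono δ γ hδ hγ hmem
    · -- coherence
      intro β γ hγ hβ hmem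
      rw [Afam_succ] at hmem
      rcases eq_or_ne γ 0 with rfl | hγ0
      · simp at hmem
      · rw [if_neg hγ0] at hmem
        rcases Set.mem_insert_iff.mp hmem with rfl | hmem'
        · ext ξ
          rw [Afam_succ, if_neg hγ0]
          constructor
          · intro hξ
            exact ⟨Set.mem_insert_of_mem _ hξ, (IH1 γ hγ).2 hξ⟩
          · rintro ⟨hξ, hξβ⟩
            rcases Set.mem_insert_iff.mp hξ with rfl | hξ'
            · exact absurd (Set.mem_Iio.mp hξβ) (lt_irrefl _)
            · exact hξ'
        · have hββ₀ : β < β₀ := (IH1 γ hγ).2 hmem'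
          rw [IH6 β γ hγ hββ₀ hmem', Afam_succ, if_neg hγ0,
            Set.insert_inter_of_notMem (by simpa using asymm hββ₀)]
  · -- limit case
    have notsucc : ¬∃ β, α = β + 1 := by
      rintro ⟨β, rfl⟩
      have := hlim.succ_lt (lt_add_one β)
      rw [← Ordinal.add_one_eq_succ] at this
      exact absurd this (lt_irrefl _)
    have IH' := fun (β : Ordinal) (hβ : β < α) => IH β hβ (hβ.trans hα)
    have cover : ∀ β, β < α → ∀ ξ < β, ∃ γ < (Order.succ lam).ord, ξ ∈ Afam lam β γ := by
      intro β hβ ξ hξ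
      have h3 := (IH' β hβ).2.2.1
      have hmem : ξ ∈ ⋃ γ ∈ Set.Iio (Order.succ lam).ord, Afam lam β γ := by
        rw [h3]; exact Set.mem_Iio.mpr hξ
      simpa using hmem
    have mono' : ∀ β, β < α → ∀ γ δ : Ordinal, γ < δ → δ < (Order.succ lam).ord →
        Afam lam β γ ⊆ Afam lam β δ := fun β hβ => (IH' β hβ).2.2.2.1
    -- a surjection from Iio K onto Iio α
    have hcard : Cardinal.mk (Set.Iio α) ≤ Cardinal.mk (Set.Iio (Order.succ lam).ord) := by
      rw [Ordinal.mk_Iio_ordinal, Ordinal.mk_Iio_ordinal, Cardinal.card_ord]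
      exact Cardinal.lift_le.2 (Order.lt_succ_iff.mp (Cardinal.lt_ord.mp hα))
    haveI hne : Nonempty (Set.Iio α) := ⟨⟨0, hlim.pos⟩⟩
    obtain ⟨e⟩ := Cardinal.le_def _ _ |>.mp hcard
    set t : Set.Iio (Order.succ lam).ord → Set.Iio α := Function.invFun e with ht_def
    have ht : Function.Surjective t := Function.invFun_surjective e.injective
    set s : Ordinal → Ordinal :=
      fun j => if h : j < (Order.succ lam).ord then (t ⟨j, h⟩ : Ordinal) else 0 with hs_def
    have hs_lt : ∀ j, s j < α := by
      intro j
      by_cases h : j < (Order.succ lam).ord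
      · simp only [hs_def, dif_pos h]; exact (t ⟨j, h⟩).2
      · simp only [hs_def, dif_neg h]; exact hlim.pos
    have hs_surj : ∀ ξ, ξ < α → ∃ j, j < (Order.succ lam).ord ∧ s j = ξ := by
      intro ξ hξ
      obtain ⟨⟨j, hj⟩, hjt⟩ := ht ⟨ξ, hξ⟩
      exact ⟨j, hj, by simp only [hs_def]; rw [dif_pos (Set.mem_Iio.mp hj), hjt]⟩
    set F := fprev lam α with hF_def
    set K := (Order.succ lam).ord with hK_def
    set g : Ordinal → Ordinal := gfun F K s with hg_def
    have hFlt : ∀ {β : Ordinal} (_ : β < α) (γ : Ordinal), F β γ = Afam lam β γ := by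
      intro β h γ
      rw [hF_def, fprev_of_lt h]
    have hlvl : ∀ x y, x < α → y < α → x ≠ y →
        lvl F K x y < K ∧ min x y ∈ F (max x y) (lvl F K x y) := by
      intro x y hx hy hxy
      apply lvl_mem
      have hmax : max x y < α := max_lt hx hy
      have hminmax : min x y < max x y := by
        rcases hxy.lt_or_gt with h | h
        · rw [min_eq_left h.le, max_eq_right h.le]; exact h
        · rw [min_eq_right h.le, max_eq_left h.le]; exact h
      obtain ⟨γ, hγ, hmem⟩ := cover (max x y) hmax (min x y) hminmax
      exact ⟨γ, hγ, by rw [hF_def, fprev_of_lt hmax]; exact hmem⟩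
    have hgK : ∀ j, j < K → g j < K := by
      intro j
      induction j using Ordinal.induction with
      | _ j IHg =>
      intro hj
      rw [hg_def, gfun_eq]
      apply Ordinal.blsub_lt_ord
      · rw [hK_def, (Cardinal.isRegular_succ hlam).cof_eq]
        exact Cardinal.lt_ord.mp hj
      · intro k hk
        exact max_lt (IHg k hk (hk.trans hj)) (lvl_lt_K hKlim.pos)
    -- the family D and its properties
    have hD : ∃ D, PD lam α (fprev lam α) D := by
      refine ⟨fun γ => {β | ∃ j, j < K ∧ g j + 1 < γ ∧ s j = β}, ?_, ?_, ?_, ?_, ?_, ?_, ?_⟩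
      · rintro γ β ⟨j, -, -, rfl⟩
        exact hs_lt j
      · rintro γ δ hγδ β ⟨j, hj, hgj, rfl⟩
        exact ⟨j, hj, hgj.trans_le hγδ, rfl⟩
      · rintro γ hγlim β ⟨j, hj, hgj, rfl⟩
        refine ⟨g j + 1 + 1, ?_, j, hj, lt_add_one _, rfl⟩
        rw [Ordinal.add_one_eq_succ (g j + 1)]
        exact hγlim.succ_lt hgj
      · ext β
        simp only [Set.mem_setOf_eq, Set.mem_empty_iff_false, iff_false, not_exists]
        rintro j ⟨-, hgj, -⟩
        exact absurd hgj not_lt_zero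
      · intro γ hγ
        have hsub : {β | ∃ j, j < K ∧ g j + 1 < γ ∧ s j = β} ⊆ s '' (Set.Iio γ) := by
          rintro β ⟨j, hj, hgj, rfl⟩
          exact ⟨j, Set.mem_Iio.mpr ((le_gfun j).trans_lt ((lt_add_one (g j)).trans hgj)), rfl⟩
        calc Cardinal.mk {β | ∃ j, j < K ∧ g j + 1 < γ ∧ s j = β}
            ≤ Cardinal.mk (s '' (Set.Iio γ)) := Cardinal.mk_le_mk_of_subset hsub
          _ ≤ Cardinal.mk (Set.Iio γ) := Cardinal.mk_image_le
          _ = Cardinal.lift.{1} γ.card := Ordinal.mk_Iio_ordinal γ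
          _ ≤ Cardinal.lift.{1} lam := hcardle γ hγ
      · intro ξ hξ
        have hξ1 : ξ + 1 < α := by
          rw [Ordinal.add_one_eq_succ]; exact hlim.succ_lt hξ
        obtain ⟨j, hj, hsj⟩ := hs_surj (ξ + 1) hξ1
        obtain ⟨γ', hγ', hmem⟩ := cover (ξ + 1) hξ1 ξ (lt_add_one ξ)
        refine ⟨max (g j + 1) γ' + 1, haddlt _ (max_lt (haddlt _ (hgK j hj)) hγ'), s j,
          ⟨j, hj, (le_max_left _ _).trans_lt (lt_add_one _), rfl⟩, ?_⟩
        rw [fprev_of_lt (show s j < α from hsj ▸ hξ1), hsj]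
        exact mono' (ξ + 1) hξ1 γ' _ ((le_max_right _ _).trans_lt (lt_add_one _))
          (haddlt _ (max_lt (haddlt _ (hgK j hj)) hγ')) hmem
      · rintro γ hγ β ⟨k, hk, hgk, rfl⟩ β' ⟨j, hj, hgj, rfl⟩ hlt
        have hne' : s k ≠ s j := hlt.ne
        rcases lt_trichotomy k j with hkj | rfl | hjk
        · have h1 := hlvl (s k) (s j) (hs_lt k) (hs_lt j) hne'
          rw [min_eq_left hlt.le, max_eq_right hlt.le] at h1
          have h2 : lvl F K (s k) (s j) < γ :=
            (lvl_lt_gfun hkj).trans ((lt_add_one (g j)).trans hgj)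
          rw [hFlt (hs_lt j)] at h1
          rw [fprev_of_lt (hs_lt j)]
          exact mono' (s j) (hs_lt j) _ γ h2 hγ h1.2
        · exact absurd rfl hne'
        · have h1 := hlvl (s j) (s k) (hs_lt j) (hs_lt k) hne'.symm
          rw [min_eq_right hlt.le, max_eq_left hlt.le] at h1
          have h2 : lvl F K (s j) (s k) < γ :=
            (lvl_lt_gfun hjk).trans ((lt_add_one (g k)).trans hgk)
          rw [hFlt (hs_lt j)] at h1
          rw [fprev_of_lt (hs_lt j)]
          exact mono' (s j) (hs_lt j) _ γ h2 hγ h1.2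
    obtain ⟨hD1, hD2, hD3, hD4, hD5, hD6, hD7⟩ := Dch_spec hD
    have Aeq : ∀ γ, Afam lam α γ = ⋃ β ∈ Dch lam α γ, fprev lam α β γ := Afam_not_succ notsucc
    have hsub : ∀ γ, γ < K → Afam lam α γ ⊆ Set.Iio α := by
      intro γ hγ ξ hξ
      rw [Aeq] at hξ
      simp only [Set.mem_iUnion, exists_prop] at hξ
      obtain ⟨β, hβD, hmem⟩ := hξ
      have hβα := hD1 γ β hβD
      rw [fprev_of_lt hβα] at hmem
      exact Set.mem_Iio.mpr ((Set.mem_Iio.mp (((IH' β hβα).1 γ hγ).2 hmem)).trans hβα)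
    have hmono : ∀ γ δ : Ordinal, γ < δ → δ < K → Afam lam α γ ⊆ Afam lam α δ := by
      intro γ δ hγδ hδ ξ hξ
      rw [Aeq] at hξ
      simp only [Set.mem_iUnion, exists_prop] at hξ
      obtain ⟨β, hβD, hmem⟩ := hξ
      have hβα := hD1 γ β hβD
      rw [fprev_of_lt hβα] at hmem
      rw [Aeq]
      refine Set.mem_biUnion (hD2 γ δ hγδ.le hβD) ?_
      rw [fprev_of_lt hβα]
      exact mono' β hβα γ δ hγδ hδ hmem
    have hmk : ∀ γ, γ < K → Cardinal.mk (Afam lam α γ) ≤ Cardinal.lift.{1} lam := by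
      intro γ hγ
      rw [Aeq γ, Set.biUnion_eq_iUnion]
      refine Cardinal.mk_iUnion_le_sum_mk.trans ?_
      refine (Cardinal.sum_le_sum _ (fun _ => Cardinal.lift.{1} lam) ?_).trans ?_
      · rintro ⟨β, hβD⟩
        have hβα := hD1 γ β hβD
        rw [fprev_of_lt hβα]
        exact ((IH' β hβα).1 γ hγ).1
      · rw [Cardinal.sum_const']
        calc Cardinal.mk (Dch lam α γ) * Cardinal.lift.{1} lam
            ≤ Cardinal.lift.{1} lam * Cardinal.lift.{1} lam :=
              mul_le_mul_left (hD5 γ hγ) _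
          _ = Cardinal.lift.{1} lam := Cardinal.mul_eq_self (Cardinal.aleph0_le_lift.mpr hlam)
    refine ⟨fun γ hγ => ⟨hmk γ hγ, hsub γ hγ⟩, by rw [Aeq 0, hD4]; simp, ?_, hmono, ?_, ?_⟩
    · -- union
      apply subset_antisymm
      · intro ξ hξ
        simp only [Set.mem_iUnion, exists_prop] at hξ
        obtain ⟨γ, hγ, hmem⟩ := hξ
        exact hsub γ hγ hmem
      · intro ξ hξ
        obtain ⟨γ, hγ, β, hβD, hmem⟩ := hD6 ξ (Set.mem_Iio.mp hξ)
        exact Set.mem_biUnion (Set.mem_Iio.mpr hγ) (by rw [Aeq]; exact Set.mem_biUnion hβD hmem)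
    · -- continuity
      intro γ hγ hγlim
      apply subset_antisymm
      · intro ξ hξ
        rw [Aeq] at hξ
        simp only [Set.mem_iUnion, exists_prop] at hξ
        obtain ⟨β, hβD, hmem⟩ := hξ
        have hβα := hD1 γ β hβD
        rw [fprev_of_lt hβα] at hmem
        obtain ⟨δ₀, hδ₀γ, hβD₀⟩ := hD3 γ hγlim β hβD
        rw [(IH' β hβα).2.2.2.2.1 γ hγ hγlim] at hmem
        simp only [Set.mem_iUnion, Set.mem_Iio, exists_prop] at hmem
        obtain ⟨δ₁, hδ₁γ, hmem⟩ := hmem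
        have hδγ : max δ₀ δ₁ + 1 < γ := by
          rw [Ordinal.add_one_eq_succ]; exact hγlim.succ_lt (max_lt hδ₀γ hδ₁γ)
        refine Set.mem_biUnion (Set.mem_Iio.mpr hδγ) ?_
        rw [Aeq]
        refine Set.mem_biUnion
          (hD2 δ₀ _ ((le_max_left _ _).trans (lt_add_one _).le) hβD₀) ?_
        rw [fprev_of_lt hβα]
        exact mono' β hβα δ₁ _ ((le_max_right _ _).trans_lt (lt_add_one _))
          (hδγ.trans hγ) hmem
      · intro ξ hξ
        simp only [Set.mem_iUnion, Set.mem_Iio, exists_prop] at hξ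
        obtain ⟨δ, hδγ, hmem⟩ := hξ
        exact hmono δ γ hδγ hγ hmem
    · -- coherence
      intro β γ hγ hβα hmem
      rw [Aeq] at hmem
      simp only [Set.mem_iUnion, exists_prop] at hmem
      obtain ⟨β', hβ'D, hmem'⟩ := hmem
      have hβ'α := hD1 γ β' hβ'D
      rw [fprev_of_lt hβ'α] at hmem'
      have hββ' : β < β' := Set.mem_Iio.mp (((IH' β' hβ'α).1 γ hγ).2 hmem')
      have hcohβ' := (IH' β' hβ'α).2.2.2.2.2 β γ hγ hββ' hmem'
      have key : Afam lam α γ ∩ Set.Iio β = Afam lam β' γ ∩ Set.Iio β := by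
        apply subset_antisymm
        · rintro ξ ⟨hξA, hξβ⟩
          rw [Aeq] at hξA
          simp only [Set.mem_iUnion, exists_prop] at hξA
          obtain ⟨β'', hβ''D, hm⟩ := hξA
          have hβ''α := hD1 γ β'' hβ''D
          rw [fprev_of_lt hβ''α] at hm
          rcases lt_trichotomy β'' β' with h | rfl | h
          · have hch := hD7 γ hγ β'' hβ''D β' hβ'D h
            rw [fprev_of_lt hβ'α] at hch
            rw [(IH' β' hβ'α).2.2.2.2.2 β'' γ hγ h hch] at hm
            exact ⟨hm.1, hξβ⟩
          · exact ⟨hm, hξβ⟩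
          · have hch := hD7 γ hγ β' hβ'D β'' hβ''D h
            rw [fprev_of_lt hβ''α] at hch
            refine ⟨?_, hξβ⟩
            rw [(IH' β'' hβ''α).2.2.2.2.2 β' γ hγ h hch]
            exact ⟨hm, Set.mem_Iio.mpr ((Set.mem_Iio.mp hξβ).trans hββ')⟩
        · rintro ξ ⟨hξA, hξβ⟩
          refine ⟨?_, hξβ⟩
          rw [Aeq]
          exact Set.mem_biUnion hβ'D (by rw [fprev_of_lt hβ'α]; exact hξA)
      rw [hcohβ', key]



end
end CoherentFiltration

/-- Coherent filtrations: for every infinite cardinal λ there is a family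
⟨A^α_γ : γ < λ⁺, α < λ⁺⁺⟩ of sets of size ≤ λ which filtrate each α < λ⁺⁺
increasingly and continuously, coherently. -/
theorem exists_coherent_filtrations (lam : Cardinal.{0}) (hlam : Cardinal.aleph0 ≤ lam) :
    ∃ A : Ordinal.{0} → Ordinal.{0} → Set Ordinal.{0},
      ∀ α < (Order.succ (Order.succ lam)).ord,
        (∀ γ < (Order.succ lam).ord,
          Cardinal.mk (A α γ) ≤ Cardinal.lift.{1} lam ∧ A α γ ⊆ Set.Iio α) ∧
        A α 0 = ∅ ∧
        (⋃ γ ∈ Set.Iio (Order.succ lam).ord, A α γ) = Set.Iio α ∧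
        (∀ γ δ : Ordinal, γ < δ → δ < (Order.succ lam).ord → A α γ ⊆ A α δ) ∧
        (∀ γ < (Order.succ lam).ord, Order.IsSuccLimit γ →
          A α γ = ⋃ δ ∈ Set.Iio γ, A α δ) ∧
        (∀ β γ : Ordinal, γ < (Order.succ lam).ord → β < α → β ∈ A α γ →
          A β γ = A α γ ∩ Set.Iio β) :=
  ⟨CoherentFiltration.Afam lam, fun α hα => CoherentFiltration.main lam hlam α hα⟩
end

section
/- Let λ be a cardinal and suppose there is NO family ⟨C_α : α < λ⁺⁺⟩ of clubs of λ⁺ such that for every club C of λ⁺ there exist α < λ⁺⁺ and λ⁺-many γ ∈ C with min(C \ (γ+1)) ≤ min(C_α \ (γ+1)). Then for any family of functions f_α : λ⁺ → λ⁺ (α < λ⁺⁺) there exists a single function f* : λ⁺ → λ⁺ such that for every α < λ⁺⁺, f_α(γ) < f*(γ) for all sufficiently large γ < λ⁺. -/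
set_option linter.deprecated false

/-- C is a club (closed unbounded set) of the ordinal o. -/
def IsClubIn (o : Ordinal.{0}) (C : Set Ordinal.{0}) : Prop :=
  C ⊆ Set.Iio o ∧
  (∀ S : Set Ordinal, S ⊆ C → S.Nonempty → sSup S < o → sSup S ∈ C) ∧
  (∀ a < o, ∃ c ∈ C, a < c)

/-- next element of C above γ -/
noncomputable def nxt (C : Set Ordinal.{0}) (γ : Ordinal.{0}) : Ordinal.{0} :=
  sInf {x | x ∈ C ∧ γ < x}

lemma nxt_spec {o : Ordinal.{0}} {C : Set Ordinal.{0}} (hC : IsClubIn o C)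
    {γ : Ordinal.{0}} (hγ : γ < o) :
    nxt C γ ∈ C ∧ γ < nxt C γ ∧ nxt C γ < o := by
  obtain ⟨c, hc, hgc⟩ := hC.2.2 γ hγ
  have hne : {x | x ∈ C ∧ γ < x}.Nonempty := ⟨c, hc, hgc⟩
  have h := csInf_mem hne
  exact ⟨h.1, h.2, hC.1 h.1⟩

noncomputable def iterFn (a : Ordinal.{0}) (F : Ordinal.{0} → Ordinal.{0}) : ℕ → Ordinal.{0}
  | 0 => a + 1
  | n + 1 => max (iterFn a F n + 1) (Ordinal.bsup (iterFn a F n) (fun δ _ => F δ + 1))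

/-- the set of closure points of F is a club in λ⁺ -/
lemma isClubIn_closurePoints (lam : Cardinal.{0}) (hlam : Cardinal.aleph0 ≤ lam)
    (F : Ordinal.{0} → Ordinal.{0}) (hF : ∀ δ, F δ < (Order.succ lam).ord) :
    IsClubIn (Order.succ lam).ord {γ | γ < (Order.succ lam).ord ∧ ∀ δ < γ, F δ < γ} := by
  set κ := (Order.succ lam).ord with hκdef
  have hreg : (Order.succ lam).IsRegular := Cardinal.isRegular_succ hlam
  have hκa : Cardinal.aleph0 ≤ Order.succ lam := hlam.trans (Order.le_succ lam)
  have hlim : Order.IsSuccLimit κ := Cardinal.isSuccLimit_ord hκa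
  have hsucc : ∀ x < κ, x + 1 < κ := by
    intro x hx
    rw [Ordinal.add_one_eq_succ]
    exact hlim.succ_lt hx
  refine ⟨fun γ hγ => hγ.1, ?_, ?_⟩
  · intro S hS hne hlt
    refine ⟨hlt, fun δ hδ => ?_⟩
    obtain ⟨s, hsS, hδs⟩ := exists_lt_of_lt_csSup hne hδ
    have hbdd : BddAbove S := ⟨κ, fun x hx => le_of_lt (hS hx).1⟩
    exact lt_of_lt_of_le ((hS hsS).2 δ hδs) (le_csSup hbdd hsS)
  · intro a ha
    set h : ℕ → Ordinal.{0} := iterFn a F with hh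
    have hlt : ∀ n, h n < κ := by
      intro n
      induction n with
      | zero => exact hsucc a ha
      | succ n ih =>
        refine max_lt (hsucc _ ih) ?_
        exact Cardinal.bsup_lt_ord_of_isRegular hreg (Cardinal.lt_ord.1 ih)
          (fun δ _ => hsucc _ (hF δ))
    have hmono : ∀ n, h n < h (n + 1) := by
      intro n
      calc h n < h n + 1 := by
            rw [Ordinal.add_one_eq_succ]; exact Order.lt_succ _
        _ ≤ h (n + 1) := le_max_left _ _
    set c : Ordinal.{0} := ⨆ n, h n with hc
    have hbdd : BddAbove (Set.range h) := Ordinal.bddAbove_range h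
    have hcκ : c < κ := by
      refine Cardinal.iSup_lt_ord_of_isRegular hreg ?_ hlt
      rw [Cardinal.mk_nat]
      exact hlam.trans_lt (Order.lt_succ lam)
    refine ⟨c, ⟨hcκ, ?_⟩, ?_⟩
    · intro δ hδ
      obtain ⟨n, hn⟩ := (lt_ciSup_iff hbdd).1 hδ
      have h1 : F δ + 1 ≤ h (n + 1) := by
        refine le_trans ?_ (le_max_right _ _)
        exact Ordinal.le_bsup (fun δ _ => F δ + 1) δ hn
      have h2 : F δ < F δ + 1 := by
        rw [Ordinal.add_one_eq_succ]; exact Order.lt_succ _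
      exact lt_of_lt_of_le (lt_of_lt_of_le h2 h1) (le_ciSup hbdd (n + 1))
    · have : a < h 0 := by
        show a < a + 1
        rw [Ordinal.add_one_eq_succ]; exact Order.lt_succ _
      exact this.trans_le (le_ciSup hbdd 0)

lemma bounded_of_mk_lt {lam : Cardinal.{0}} (hlam : Cardinal.aleph0 ≤ lam)
    {B : Set Ordinal.{0}} (hB : B ⊆ Set.Iio (Order.succ lam).ord)
    (hmk : Cardinal.mk B < Cardinal.lift.{1} (Order.succ lam)) :
    ∃ γ₀ < (Order.succ lam).ord, ∀ γ ∈ B, γ < γ₀ := by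
  set κ := (Order.succ lam).ord with hκdef
  have hreg : (Order.succ lam).IsRegular := Cardinal.isRegular_succ hlam
  have hκa : Cardinal.aleph0 ≤ Order.succ lam := hlam.trans (Order.le_succ lam)
  have hlim : Order.IsSuccLimit κ := Cardinal.isSuccLimit_ord hκa
  obtain ⟨b, hb, hbe⟩ := Cardinal.lt_lift_iff.1 hmk
  obtain ⟨e⟩ : Nonempty (b.out ≃ B) := by
    rw [← Cardinal.lift_mk_eq']
    rw [Cardinal.mk_out, hbe]
    simp
  set s : Ordinal.{0} := ⨆ i : b.out, ((e i : Ordinal)) with hs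
  have hbdd : BddAbove (Set.range fun i : b.out => ((e i : Ordinal))) :=
    Ordinal.bddAbove_range _
  have hsκ : s < κ := by
    refine Cardinal.iSup_lt_ord_of_isRegular hreg ?_ (fun i => hB (e i).2)
    rw [Cardinal.mk_out]; exact hb
  refine ⟨s + 1, ?_, ?_⟩
  · rw [Ordinal.add_one_eq_succ]; exact hlim.succ_lt hsκ
  · intro γ hγ
    have : γ ≤ s := by
      have := le_ciSup hbdd (e.symm ⟨γ, hγ⟩)
      simpa using this
    have h2 : s < s + 1 := by
      rw [Ordinal.add_one_eq_succ]; exact Order.lt_succ _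
    exact lt_of_le_of_lt this h2

/-- If there is no family ⟨C_α : α < λ⁺⁺⟩ of clubs of λ⁺ such that every club C of λ⁺
has, for some α, λ⁺-many γ ∈ C with min(C \ (γ+1)) ≤ min(C_α \ (γ+1)), then every
λ⁺⁺-family of functions λ⁺ → λ⁺ is eventually dominated by a single function. -/
theorem eventually_dominating_function_of_no_club_family (lam : Cardinal.{0})
    (hlam : Cardinal.aleph0 ≤ lam)
    (hno : ¬ ∃ Cfam : Ordinal.{0} → Set Ordinal.{0},
      (∀ α < (Order.succ (Order.succ lam)).ord, IsClubIn (Order.succ lam).ord (Cfam α)) ∧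
      ∀ C : Set Ordinal.{0}, IsClubIn (Order.succ lam).ord C →
        ∃ α < (Order.succ (Order.succ lam)).ord,
          Cardinal.lift.{1} (Order.succ lam) ≤
            Cardinal.mk {γ : Ordinal // γ ∈ C ∧
              sInf {x | x ∈ C ∧ γ < x} ≤ sInf {x | x ∈ Cfam α ∧ γ < x}}) :
    ∀ f : Ordinal.{0} → Ordinal.{0} → Ordinal.{0},
      (∀ α < (Order.succ (Order.succ lam)).ord, ∀ γ < (Order.succ lam).ord,
        f α γ < (Order.succ lam).ord) →
      ∃ g : Ordinal.{0} → Ordinal.{0},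
        (∀ γ < (Order.succ lam).ord, g γ < (Order.succ lam).ord) ∧
        ∀ α < (Order.succ (Order.succ lam)).ord,
          ∃ γ₀ < (Order.succ lam).ord,
            ∀ γ, γ₀ ≤ γ → γ < (Order.succ lam).ord → f α γ < g γ := by
  intro f hf
  set κ := (Order.succ lam).ord with hκdef
  have hκa : Cardinal.aleph0 ≤ Order.succ lam := hlam.trans (Order.le_succ lam)
  have hκpos : 0 < κ := Cardinal.isSuccLimit_ord hκa |>.pos
  set F : Ordinal.{0} → Ordinal.{0} → Ordinal.{0} :=
    fun α δ => if f α δ < κ then f α δ else 0 with hFdef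
  have hFlt : ∀ α δ, F α δ < κ := by
    intro α δ
    simp only [hFdef]
    split
    · assumption
    · exact hκpos
  set Cfam : Ordinal.{0} → Set Ordinal.{0} :=
    fun α => {γ | γ < κ ∧ ∀ δ < γ, F α δ < γ} with hCfamdef
  have hclub : ∀ α, IsClubIn κ (Cfam α) :=
    fun α => isClubIn_closurePoints lam hlam (F α) (hFlt α)
  have hQ : ¬ ∀ C : Set Ordinal.{0}, IsClubIn κ C →
      ∃ α < (Order.succ (Order.succ lam)).ord,
        Cardinal.lift.{1} (Order.succ lam) ≤
          Cardinal.mk {γ : Ordinal // γ ∈ C ∧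
            sInf {x | x ∈ C ∧ γ < x} ≤ sInf {x | x ∈ Cfam α ∧ γ < x}} :=
    fun hq => hno ⟨Cfam, fun α _ => hclub α, hq⟩
  push_neg at hQ
  obtain ⟨C, hC, hsmall⟩ := hQ
  refine ⟨fun γ => nxt C (nxt C γ), ?_, ?_⟩
  · intro γ hγ
    exact (nxt_spec hC (nxt_spec hC hγ).2.2).2.2
  · intro α hα
    have hmk : Cardinal.mk {γ | γ ∈ C ∧ nxt C γ ≤ nxt (Cfam α) γ} <
        Cardinal.lift.{1} (Order.succ lam) := hsmall α hα
    have hBsub : {γ | γ ∈ C ∧ nxt C γ ≤ nxt (Cfam α) γ} ⊆ Set.Iio κ :=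
      fun γ hγ => hC.1 hγ.1
    obtain ⟨γ₀, hγ₀κ, hbd⟩ := bounded_of_mk_lt hlam hBsub hmk
    refine ⟨γ₀, hγ₀κ, ?_⟩
    intro γ hγ₀γ hγκ
    obtain ⟨hδC, hγδ, hδκ⟩ := nxt_spec hC hγκ
    have hδnB : ¬ nxt C (nxt C γ) ≤ nxt (Cfam α) (nxt C γ) := by
      intro hle
      have h1 := hbd (nxt C γ) ⟨hδC, hle⟩
      exact absurd (hγ₀γ.trans_lt hγδ) (not_lt_of_gt h1)
    have hclt : nxt (Cfam α) (nxt C γ) < nxt C (nxt C γ) := lt_of_not_ge hδnB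
    obtain ⟨hcC, hδc, hcκ⟩ := nxt_spec (hclub α) hδκ
    have hFγ : F α γ < nxt (Cfam α) (nxt C γ) := hcC.2 γ (hγδ.trans hδc)
    have hfF : F α γ = f α γ := if_pos (hf α hα γ hγκ)
    calc f α γ = F α γ := hfF.symm
      _ < nxt (Cfam α) (nxt C γ) := hFγ
      _ < nxt C (nxt C γ) := hclt
end
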